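/- arXiv:2307.13155 — 6 statements merged into one kernel-verified Lean document; each statement's English description precedes it below -/
import Mathlib

section
/- Let Γ be a countable group. The following are equivalent: (1) Γ is LEF; (2) there exists a separating partial homomorphism φ_n : Γ → Sym(k_n), i.e. a partial homomorphism such that liminf_n d_Hamm(φ_n(g), id) > 0 for every g ≠ e; (3) there exists a separating partial homomorphism φ_n : Γ → U(k_n), i.e. a partial homomorphism such that liminf_n ‖φ_n(g) − 1‖₂ > 0 for every g ≠ e. -/
open Filter Matrix
open scoped ComplexOrder

noncomputable section

/-- The group of `k × k` complex unitary matrices. -/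
abbrev UGp (k : ℕ) := Matrix.unitaryGroup (Fin k) ℂ

/-- The normalized Hilbert–Schmidt distance `‖A - B‖₂ = (τ_k((A-B)*(A-B)))^{1/2}`
on `k × k` complex matrices, where `τ_k` is the normalized trace. -/
def hsDist (k : ℕ) (A B : Matrix (Fin k) (Fin k) ℂ) : ℝ :=
  Real.sqrt ((Matrix.trace ((A - B)ᴴ * (A - B))).re / k)

/-- The normalized trace `τ_k = (1/k)·Tr` on `k × k` complex matrices. -/
def nTrace (k : ℕ) (A : Matrix (Fin k) (Fin k) ℂ) : ℂ :=
  Matrix.trace A / k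

/-- The normalized Hamming distance on the symmetric group `Sym(k)`. -/
def hammDist (k : ℕ) (σ τ : Equiv.Perm (Fin k)) : ℝ :=
  (Finset.univ.filter fun i => σ i ≠ τ i).card / k

/-- A sequence of maps `φ_n : Γ → G_n` is a partial homomorphism if for all `g, h ∈ Γ`
there is `N` with `φ_n(gh) = φ_n(g)φ_n(h)` for all `n ≥ N`. -/
def IsPartialHom {Γ : Type*} [Group Γ] {G : ℕ → Type*} [∀ n, Group (G n)]
    (φ : ∀ n, Γ → G n) : Prop :=
  ∀ g h : Γ, ∃ N : ℕ, ∀ n ≥ N, φ n (g * h) = φ n g * φ n h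

/-- An approximate homomorphism into the unitary groups `U(k_n)` with the
normalized Hilbert–Schmidt distance. -/
def IsApproxHomU {Γ : Type*} [Group Γ] (k : ℕ → ℕ)
    (φ : ∀ n, Γ → UGp (k n)) : Prop :=
  ∀ g h : Γ,
    Tendsto (fun n => hsDist (k n) (φ n (g * h)) (φ n g * φ n h)) atTop (nhds 0)

/-- Two sequences of maps into the unitary groups `U(k_n)` are close if
`‖φ_n(g) - ψ_n(g)‖₂ → 0` for every `g`. -/
def CloseU {Γ : Type*} [Group Γ] (k : ℕ → ℕ) (φ ψ : ∀ n, Γ → UGp (k n)) : Prop :=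
  ∀ g : Γ, Tendsto (fun n => hsDist (k n) (φ n g) (ψ n g)) atTop (nhds 0)

/-- A group is locally HS-stable if every approximate homomorphism into unitary
groups (with normalized Hilbert–Schmidt distance) is close to a partial homomorphism. -/
def LocallyHSStable (Γ : Type*) [Group Γ] : Prop :=
  ∀ (k : ℕ → ℕ) (φ : ∀ n, Γ → UGp (k n)), IsApproxHomU k φ →
    ∃ ψ : ∀ n, Γ → UGp (k n), IsPartialHom ψ ∧ CloseU k φ ψ

/-- A group `Γ` is LEF if every finite subset `B ⊆ Γ` admits a map to a finite group
which is injective on `B` and multiplicative on `B`. -/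
def IsLEF (Γ : Type*) [Group Γ] : Prop :=
  ∀ B : Finset Γ, ∃ (F : Type) (_ : Group F) (_ : Finite F) (φ : Γ → F),
    Set.InjOn φ ↑B ∧ ∀ g ∈ B, ∀ h ∈ B, φ (g * h) = φ g * φ h

/-- A group is MAP if finite-dimensional unitary representations separate points. -/
def IsMAP (Γ : Type*) [Group Γ] : Prop :=
  ∀ g : Γ, g ≠ 1 → ∃ (k : ℕ) (π : Γ →* UGp k), π g ≠ 1

/-- A group is hyperlinear if it admits a separating approximate homomorphism into
the unitary groups with the normalized Hilbert–Schmidt distance. -/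
def IsHyperlinear (Γ : Type*) [Group Γ] : Prop :=
  ∃ (k : ℕ → ℕ) (φ : ∀ n, Γ → UGp (k n)), IsApproxHomU k φ ∧
    ∀ g : Γ, g ≠ 1 → 0 < Filter.liminf (fun n => hsDist (k n) (φ n g) 1) atTop

/-- The top-left `k × k` corner of an `m × m` matrix. -/
def corner {k m : ℕ} (h : k ≤ m) (A : Matrix (Fin m) (Fin m) ℂ) :
    Matrix (Fin k) (Fin k) ℂ :=
  A.submatrix (Fin.castLE h) (Fin.castLE h)

/-- Very flexible local HS-stability: every approximate homomorphism
`φ_n : Γ → U(k_n)` is close (in the corner sense) to a partial homomorphism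
`ψ_n : Γ → U(m_n)` for some `m_n ≥ k_n`. -/
def VeryFlexiblyLocallyHSStable (Γ : Type*) [Group Γ] : Prop :=
  ∀ (k : ℕ → ℕ) (φ : ∀ n, Γ → UGp (k n)), IsApproxHomU k φ →
    ∃ (m : ℕ → ℕ) (hm : ∀ n, k n ≤ m n) (ψ : ∀ n, Γ → UGp (m n)),
      IsPartialHom ψ ∧
      ∀ g : Γ, Tendsto (fun n => hsDist (k n) (φ n g) (corner (hm n) (ψ n g)))
        atTop (nhds 0)

/-- Flexible local HS-stability: as in the very flexible version, but requiring
`m_n / k_n → 1`. -/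
def FlexiblyLocallyHSStable (Γ : Type*) [Group Γ] : Prop :=
  ∀ (k : ℕ → ℕ) (φ : ∀ n, Γ → UGp (k n)), IsApproxHomU k φ →
    ∃ (m : ℕ → ℕ) (hm : ∀ n, k n ≤ m n),
      Tendsto (fun n => (m n : ℝ) / k n) atTop (nhds 1) ∧
      ∃ ψ : ∀ n, Γ → UGp (m n), IsPartialHom ψ ∧
        ∀ g : Γ, Tendsto (fun n => hsDist (k n) (φ n g) (corner (hm n) (ψ n g)))
          atTop (nhds 0)

/-- A hyperlinear approximation: an approximate homomorphism into unitary groups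
with `‖φ_n(g) - 1‖₂ → √2` for every `g ≠ e`. -/
def IsHyperlinearApprox {Γ : Type*} [Group Γ] (k : ℕ → ℕ)
    (φ : ∀ n, Γ → UGp (k n)) : Prop :=
  IsApproxHomU k φ ∧
    ∀ g : Γ, g ≠ 1 →
      Tendsto (fun n => hsDist (k n) (φ n g) 1) atTop (nhds (Real.sqrt 2))

/-- Weak HS-stability: every hyperlinear approximation is close to a sequence of
genuine homomorphisms. -/
def WeaklyHSStable (Γ : Type*) [Group Γ] : Prop :=
  ∀ (k : ℕ → ℕ) (φ : ∀ n, Γ → UGp (k n)), IsHyperlinearApprox k φ →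
    ∃ ψ : ∀ n, Γ →* UGp (k n), CloseU k φ (fun n g => ψ n g)

/-- Weak local HS-stability: every hyperlinear approximation is close to a
partial homomorphism. -/
def WeaklyLocallyHSStable (Γ : Type*) [Group Γ] : Prop :=
  ∀ (k : ℕ → ℕ) (φ : ∀ n, Γ → UGp (k n)), IsHyperlinearApprox k φ →
    ∃ ψ : ∀ n, Γ → UGp (k n), IsPartialHom ψ ∧ CloseU k φ ψ

/-- A group is amenable if it admits a left-invariant mean, here formulated as a
left-invariant finitely additive probability measure defined on all subsets
(equivalently, a left-invariant mean on `ℓ^∞(Γ)`). -/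
def IsAmenable (Γ : Type*) [Group Γ] : Prop :=
  ∃ m : Set Γ → ℝ,
    (∀ A : Set Γ, 0 ≤ m A) ∧ m Set.univ = 1 ∧
    (∀ A B : Set Γ, Disjoint A B → m (A ∪ B) = m A + m B) ∧
    (∀ (g : Γ) (A : Set Γ), m ((g * ·) '' A) = m A)

/-- A character of `Γ`: a positive definite, conjugation-invariant function with
`χ(e) = 1`. -/
def IsCharacter {Γ : Type*} [Group Γ] (χ : Γ → ℂ) : Prop :=
  (∀ (m : ℕ) (g : Fin m → Γ), (Matrix.of fun i j => χ ((g i)⁻¹ * g j)).PosSemidef) ∧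
    (∀ g h : Γ, χ (g * h) = χ (h * g)) ∧ χ 1 = 1

/-- An extremal character: one that cannot be written as a nontrivial convex
combination of characters. -/
def IsExtremalCharacter {Γ : Type*} [Group Γ] (χ : Γ → ℂ) : Prop :=
  IsCharacter χ ∧
    ∀ (t : ℝ) (χ₁ χ₂ : Γ → ℂ), 0 < t → t < 1 → IsCharacter χ₁ → IsCharacter χ₂ →
      (∀ g : Γ, χ g = (t : ℂ) * χ₁ g + (1 - (t : ℂ)) * χ₂ g) → χ₁ = χ ∧ χ₂ = χ

/-- An approximate homomorphism into the symmetric groups `Sym(k_n)` with the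
normalized Hamming distance. -/
def IsApproxHomP {Γ : Type*} [Group Γ] (k : ℕ → ℕ)
    (φ : ∀ n, Γ → Equiv.Perm (Fin (k n))) : Prop :=
  ∀ g h : Γ,
    Tendsto (fun n => hammDist (k n) (φ n (g * h)) (φ n g * φ n h)) atTop (nhds 0)

/-- A group is locally P-stable if every approximate homomorphism into symmetric
groups (with normalized Hamming distance) is close to a partial homomorphism. -/
def LocallyPStable (Γ : Type*) [Group Γ] : Prop :=
  ∀ (k : ℕ → ℕ) (φ : ∀ n, Γ → Equiv.Perm (Fin (k n))), IsApproxHomP k φ →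
    ∃ ψ : ∀ n, Γ → Equiv.Perm (Fin (k n)), IsPartialHom ψ ∧
      ∀ g : Γ, Tendsto (fun n => hammDist (k n) (φ n g) (ψ n g)) atTop (nhds 0)

/-- A group is finitely presented if it is the quotient of a finitely generated
free group by the normal closure of finitely many relators. -/
def IsFinitelyPresented (Γ : Type*) [Group Γ] : Prop :=
  ∃ (n : ℕ) (π : FreeGroup (Fin n) →* Γ) (R : Finset (FreeGroup (Fin n))),
    Function.Surjective π ∧ π.ker = Subgroup.normalClosure (R : Set (FreeGroup (Fin n)))



open scoped Pointwise

set_option maxHeartbeats 1000000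
set_option synthInstance.maxHeartbeats 100000

lemma int_isJacobsonRing : IsJacobsonRing ℤ := by
  rw [isJacobsonRing_iff_prime_eq]
  intro P hP
  rcases eq_or_ne P ⊥ with rfl | hne
  · refine le_antisymm (fun x hx => ?_) Ideal.le_jacobson
    rw [Ideal.mem_bot]
    by_contra hx0
    obtain ⟨p, hple, hp⟩ := Nat.exists_infinite_primes (x.natAbs + 1)
    have hm : (Ideal.span {(p : ℤ)}).IsMaximal :=
      PrincipalIdealRing.isMaximal_of_irreducible
        ((Nat.prime_iff_prime_int.mp hp).irreducible)
    have hxm : x ∈ Ideal.span {(p : ℤ)} :=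
      Ideal.mem_sInf.mp hx ⟨bot_le, hm⟩
    rw [Ideal.mem_span_singleton] at hxm
    have : p ∣ x.natAbs := by
      have := Int.natAbs_dvd_natAbs.mpr hxm
      simpa using this
    have := Nat.le_of_dvd (Int.natAbs_pos.mpr hx0) this
    omega
  · haveI : P.IsMaximal := @IsPrime.to_maximal_ideal _ _ _ _ _ hP hne
    exact Ideal.jacobson_eq_self_of_isMaximal

lemma finite_of_field_finiteType (K : Type*) [Field K] [Algebra.FiniteType ℤ K] :
    Finite K := by
  have : IsJacobsonRing ℤ := int_isJacobsonRing
  have hfin : Module.Finite ℤ K := finite_of_finite_type_of_isJacobsonRing ℤ K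
  have hint : Algebra.IsIntegral ℤ K := Algebra.IsIntegral.of_finite ℤ K
  have hnotCZ : ¬ CharZero K := by
    intro hcz
    have hinj : Function.Injective (algebraMap ℤ K) := by
      intro x y h
      have : (x : K) = (y : K) := by simpa [algebraMap_int_eq, eq_intCast] using h
      exact_mod_cast this
    exact Int.not_isField
      ((Algebra.IsIntegral.isField_iff_isField hinj).mpr (Field.toIsField K))
  set p := ringChar K with hp
  have hp0 : p ≠ 0 := by
    intro h
    haveI : CharP K 0 := h ▸ ringChar.charP K
    exact hnotCZ (CharP.charP_to_charZero K)
  have htor : Module.IsTorsion ℤ K := by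
    intro x
    refine ⟨⟨(p : ℤ), mem_nonZeroDivisors_of_ne_zero (by exact_mod_cast hp0)⟩, ?_⟩
    have : ((p : ℤ) : K) = 0 := by
      haveI : CharP K p := ringChar.charP K
      simp only [Int.cast_natCast]
      exact CharP.cast_eq_zero K p
    simp [zsmul_eq_mul, this]
  exact Module.finite_of_fg_torsion K htor

lemma exists_hom_finField (A : Type) [CommRing A] [IsDomain A] [Algebra.FiniteType ℤ A]
    (a : A) (ha : a ≠ 0) :
    ∃ (K : Type) (_ : Field K) (_ : Finite K) (ψ : A →+* K), ψ a ≠ 0 := by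
  have : IsJacobsonRing ℤ := int_isJacobsonRing
  have hJ : IsJacobsonRing A := isJacobsonRing_of_finiteType (A := ℤ)
  -- find a maximal ideal not containing a
  have hbot : ((⊥ : Ideal A)).jacobson = ⊥ := hJ.out Ideal.isRadical_bot_of_noZeroDivisors
  have : ∃ m : Ideal A, m.IsMaximal ∧ a ∉ m := by
    by_contra h
    push_neg at h
    have : a ∈ ((⊥ : Ideal A)).jacobson :=
      Ideal.mem_sInf.mpr (fun {J} hJ' => h J hJ'.2)
    rw [hbot, Ideal.mem_bot] at this
    exact ha this
  obtain ⟨m, hm, ham⟩ := this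
  letI : Field (A ⧸ m) := Ideal.Quotient.field m
  have hft : Algebra.FiniteType ℤ (A ⧸ m) :=
    Algebra.FiniteType.of_surjective (Ideal.Quotient.mkₐ ℤ m)
      (Ideal.Quotient.mkₐ_surjective ℤ m)
  have : Finite (A ⧸ m) := @finite_of_field_finiteType (A ⧸ m) _ (by convert hft; rfl; exact Subsingleton.elim _ _)
  refine ⟨A ⧸ m, inferInstance, inferInstance, Ideal.Quotient.mk m, ?_⟩
  rwa [Ne, Ideal.Quotient.eq_zero_iff_mem]

-- liminf helpers
lemma myIsBddBelow {f : ℕ → ℝ} (h0 : ∀ n, 0 ≤ f n) :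
    Filter.IsBoundedUnder (· ≥ ·) Filter.atTop f :=
  ⟨0, Filter.eventually_map.mpr (Filter.Eventually.of_forall h0)⟩

lemma ev_ne_of_liminf_pos {f : ℕ → ℝ} (h0 : ∀ n, 0 ≤ f n)
    (h : 0 < Filter.liminf f Filter.atTop) : ∀ᶠ n in Filter.atTop, f n ≠ 0 := by
  by_contra hc
  rw [Filter.not_eventually] at hc
  have hfreq : ∃ᶠ n in Filter.atTop, f n ≤ 0 := hc.mono (by intro n hn; simp at hn; simp [hn])
  have := Filter.liminf_le_of_frequently_le hfreq (myIsBddBelow h0)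
  linarith

lemma liminf_pos_of_ev_ge {f : ℕ → ℝ} {b c : ℝ} (hb : ∀ n, f n ≤ b) (hc : 0 < c)
    (h : ∀ᶠ n in Filter.atTop, c ≤ f n) : 0 < Filter.liminf f Filter.atTop := by
  have hcb : Filter.IsCoboundedUnder (· ≥ ·) Filter.atTop f :=
    Filter.isCoboundedUnder_ge_of_eventually_le Filter.atTop (Filter.Eventually.of_forall hb)
  exact lt_of_lt_of_le hc (Filter.le_liminf_of_le hcb h)

lemma ev_ge_of_liminf_pos {f : ℕ → ℝ} (h0 : ∀ n, 0 ≤ f n)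
    (h : 0 < Filter.liminf f Filter.atTop) :
    ∃ c > 0, ∀ᶠ n in Filter.atTop, c < f n := by
  refine ⟨Filter.liminf f Filter.atTop / 2, by linarith, ?_⟩
  exact Filter.eventually_lt_of_lt_liminf (by linarith) (myIsBddBelow h0)

-- hammDist basic facts
lemma hammDist_nonneg (k : ℕ) (σ τ : Equiv.Perm (Fin k)) : 0 ≤ hammDist k σ τ := by
  unfold hammDist; positivity

lemma hammDist_le_one (k : ℕ) (σ τ : Equiv.Perm (Fin k)) : hammDist k σ τ ≤ 1 := by
  unfold hammDist
  rcases Nat.eq_zero_or_pos k with hk | hk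
  · subst hk; simp
  · rw [div_le_one (by exact_mod_cast hk)]
    exact_mod_cast (Finset.card_filter_le _ _).trans (by simp)

lemma hsDist_nonneg (k : ℕ) (A B : Matrix (Fin k) (Fin k) ℂ) : 0 ≤ hsDist k A B :=
  Real.sqrt_nonneg _

lemma hsDist_self (k : ℕ) (A : Matrix (Fin k) (Fin k) ℂ) : hsDist k A A = 0 := by
  simp [hsDist]

-- permutation matrices
def pMat (k : ℕ) (σ : Equiv.Perm (Fin k)) : Matrix (Fin k) (Fin k) ℂ :=
  Matrix.of fun i j => if i = σ j then 1 else 0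

lemma pMat_mul (k : ℕ) (σ τ : Equiv.Perm (Fin k)) :
    pMat k (σ * τ) = pMat k σ * pMat k τ := by
  ext i j
  rw [Matrix.mul_apply]
  simp only [pMat, Matrix.of_apply, ite_mul, one_mul, zero_mul, mul_ite, mul_one, mul_zero,
    ite_self]
  rw [Finset.sum_ite_eq' Finset.univ (τ j) (fun l => if i = σ l then (1:ℂ) else 0)]
  simp [Equiv.Perm.mul_apply]
  congr

lemma pMat_one (k : ℕ) : pMat k 1 = 1 := by
  ext i j
  simp [pMat, Matrix.one_apply, eq_comm]
  congr

lemma pMat_conjTranspose (k : ℕ) (σ : Equiv.Perm (Fin k)) :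
    (pMat k σ)ᴴ = pMat k σ⁻¹ := by
  ext i j
  simp only [Matrix.conjTranspose_apply, pMat, Matrix.of_apply]
  rcases eq_or_ne j (σ i) with h | h
  · subst h; simp
  · rw [if_neg h, if_neg]
    · simp
    · intro hi
      exact h (by rw [hi]; simp)

lemma pMat_mem (k : ℕ) (σ : Equiv.Perm (Fin k)) : pMat k σ ∈ Matrix.unitaryGroup (Fin k) ℂ := by
  constructor
  · rw [Matrix.star_eq_conjTranspose, pMat_conjTranspose, ← pMat_mul]
    simp [pMat_one]
  · rw [Matrix.star_eq_conjTranspose, pMat_conjTranspose, ← pMat_mul]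
    simp [pMat_one]

def pU (k : ℕ) (σ : Equiv.Perm (Fin k)) : UGp k := ⟨pMat k σ, pMat_mem k σ⟩

lemma pU_mul (k : ℕ) (σ τ : Equiv.Perm (Fin k)) : pU k (σ * τ) = pU k σ * pU k τ :=
  Subtype.ext (pMat_mul k σ τ)

lemma hsDist_pMat (k : ℕ) (σ τ : Equiv.Perm (Fin k)) :
    hsDist k (pMat k σ) (pMat k τ) = Real.sqrt (2 * hammDist k σ τ) := by
  have key : Matrix.trace ((pMat k σ - pMat k τ)ᴴ * (pMat k σ - pMat k τ)) =
      ((Finset.univ.filter fun i => σ i ≠ τ i).card : ℂ) * 2 := by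
    rw [Matrix.trace]
    have hcol : ∀ i : Fin k,
        ((pMat k σ - pMat k τ)ᴴ * (pMat k σ - pMat k τ)).diag i
          = if σ i ≠ τ i then (2:ℂ) else 0 := by
      intro i
      rw [Matrix.diag_apply, Matrix.mul_apply]
      rcases eq_or_ne (σ i) (τ i) with h | h
      · rw [if_neg (not_not_intro h)]
        apply Finset.sum_eq_zero
        intro j _
        simp [pMat, Matrix.conjTranspose_apply, Matrix.sub_apply, h]
      · rw [if_pos h]
        have key2 : ∀ j : Fin k,
            ((pMat k σ - pMat k τ)ᴴ) i j * (pMat k σ - pMat k τ) j i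
              = (if j = σ i then (1:ℂ) else 0) + (if j = τ i then 1 else 0) := by
          intro j
          simp only [Matrix.conjTranspose_apply, Matrix.sub_apply, pMat, Matrix.of_apply]
          rcases eq_or_ne j (σ i) with rfl | h1
          · simp [h]
          · rcases eq_or_ne j (τ i) with rfl | h2
            · simp [Ne.symm h, h1]
            · simp [h1, h2]
        calc (∑ j, ((pMat k σ - pMat k τ)ᴴ) i j * (pMat k σ - pMat k τ) j i)
            = ∑ j : Fin k, ((if j = σ i then (1:ℂ) else 0) + (if j = τ i then 1 else 0)) := by
              exact Finset.sum_congr rfl fun j _ => key2 j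
          _ = 2 := by
              rw [Finset.sum_add_distrib,
                Finset.sum_ite_eq' Finset.univ (σ i) (fun _ => (1:ℂ)),
                Finset.sum_ite_eq' Finset.univ (τ i) (fun _ => (1:ℂ))]
              norm_num
    calc (∑ i, ((pMat k σ - pMat k τ)ᴴ * (pMat k σ - pMat k τ)).diag i)
        = ∑ i : Fin k, (if σ i ≠ τ i then (2:ℂ) else 0) :=
          Finset.sum_congr rfl fun i _ => hcol i
      _ = ((Finset.univ.filter fun i => σ i ≠ τ i).card : ℂ) * 2 := by
          rw [Finset.sum_ite, Finset.sum_const, Finset.sum_const]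
          simp [mul_comm]
  rw [hsDist, key, hammDist]
  rw [show (((Finset.univ.filter fun i => σ i ≠ τ i).card : ℂ) * 2)
      = (((2 * ((Finset.univ.filter fun i => σ i ≠ τ i).card : ℝ)) : ℝ) : ℂ) from by
    push_cast; ring]
  rw [Complex.ofReal_re, mul_div_assoc]

lemma lef_to_perm (Γ : Type*) [Group Γ] [Countable Γ] (hLEF : IsLEF Γ) :
    ∃ (k : ℕ → ℕ) (φ : ∀ n, Γ → Equiv.Perm (Fin (k n))), IsPartialHom φ ∧
      ∀ g : Γ, g ≠ 1 →
        0 < Filter.liminf (fun n => hammDist (k n) (φ n g) 1) Filter.atTop := by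
  classical
  obtain ⟨f, hf⟩ := exists_surjective_nat Γ
  set B : ℕ → Finset Γ := fun n => insert 1 ((Finset.range (n + 1)).image f) with hB
  choose F instG instF φ hinj hmul using fun n => hLEF (B n)
  have h1mem : ∀ n, (1 : Γ) ∈ B n := fun n => Finset.mem_insert_self _ _
  have hmemB : ∀ (g : Γ) (i : ℕ), f i = g → ∀ n ≥ i, g ∈ B n := by
    intro g i hi n hn
    refine Finset.mem_insert_of_mem (Finset.mem_image.mpr ⟨i, ?_, hi⟩)
    exact Finset.mem_range.mpr (by omega)
  have hφ1 : ∀ n, φ n 1 = 1 := by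
    intro n
    have := hmul n 1 (h1mem n) 1 (h1mem n)
    rw [one_mul] at this
    exact (right_eq_mul.mp this)
  letI : ∀ n, Group (F n) := instG
  letI : ∀ n, Finite (F n) := instF
  set k : ℕ → ℕ := fun n => Nat.card (F n) with hk
  set e : ∀ n, F n ≃ Fin (k n) := fun n => Finite.equivFin (F n) with he
  set ψ : ∀ n, Γ → Equiv.Perm (Fin (k n)) :=
    fun n g => ((e n).permCongr) (Equiv.mulLeft (φ n g)) with hψ
  have hψapp : ∀ n g x, ψ n g x = e n (φ n g * (e n).symm x) := by
    intro n g x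
    simp [hψ, Equiv.permCongr_apply]
  refine ⟨k, ψ, ?_, ?_⟩
  · intro g h
    obtain ⟨i, hi⟩ := hf g
    obtain ⟨j, hj⟩ := hf h
    refine ⟨max i j, fun n hn => ?_⟩
    have hg : g ∈ B n := hmemB g i hi n (le_trans (le_max_left _ _) hn)
    have hh : h ∈ B n := hmemB h j hj n (le_trans (le_max_right _ _) hn)
    have hm := hmul n g hg h hh
    ext x
    rw [hψapp, hm]
    simp [hψapp, Equiv.Perm.mul_apply, mul_assoc]
  · intro g hg
    obtain ⟨i, hi⟩ := hf g
    apply liminf_pos_of_ev_ge (fun n => hammDist_le_one _ _ _) one_pos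
    rw [eventually_atTop]
    refine ⟨i, fun n hn => ?_⟩
    have hgB : g ∈ B n := hmemB g i hi n hn
    have hne : φ n g ≠ 1 := by
      intro hgone
      exact hg (hinj n hgB (h1mem n) (by rw [hgone, hφ1 n]))
    have hfix : ∀ x : Fin (k n), ψ n g x ≠ x := by
      intro x hx
      rw [hψapp] at hx
      apply hne
      have := (Equiv.apply_eq_iff_eq_symm_apply (e n)).mp hx
      exact mul_eq_right.mp this
    have hk0 : 0 < k n := Nat.card_pos
    have : (Finset.univ.filter fun x => ψ n g x ≠ (1 : Equiv.Perm (Fin (k n))) x)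
        = Finset.univ := by
      apply Finset.filter_true_of_mem
      intro x _
      simpa using hfix x
    rw [hammDist, this]
    simp only [Finset.card_univ, Fintype.card_fin]
    rw [div_self (by exact_mod_cast hk0.ne')]

lemma perm_to_unitary (Γ : Type*) [Group Γ]
    (h : ∃ (k : ℕ → ℕ) (φ : ∀ n, Γ → Equiv.Perm (Fin (k n))), IsPartialHom φ ∧
      ∀ g : Γ, g ≠ 1 →
        0 < Filter.liminf (fun n => hammDist (k n) (φ n g) 1) Filter.atTop) :
    ∃ (k : ℕ → ℕ) (φ : ∀ n, Γ → UGp (k n)), IsPartialHom φ ∧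
      ∀ g : Γ, g ≠ 1 →
        0 < Filter.liminf (fun n => hsDist (k n) (φ n g) 1) Filter.atTop := by
  obtain ⟨k, φ, hpart, hsep⟩ := h
  refine ⟨k, fun n g => pU (k n) (φ n g), ?_, ?_⟩
  · intro g h
    obtain ⟨N, hN⟩ := hpart g h
    exact ⟨N, fun n hn => by simp only []; rw [hN n hn, pU_mul]⟩
  · intro g hg
    have hdist : ∀ n, hsDist (k n) (pU (k n) (φ n g)) 1
        = Real.sqrt (2 * hammDist (k n) (φ n g) 1) := by
      intro n
      have : ((pU (k n) (φ n g) : UGp (k n)) : Matrix (Fin (k n)) (Fin (k n)) ℂ)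
          = pMat (k n) (φ n g) := rfl
      rw [this, show (1 : Matrix (Fin (k n)) (Fin (k n)) ℂ) = pMat (k n) 1 from
        (pMat_one (k n)).symm, hsDist_pMat]
    obtain ⟨c, hc, hev⟩ := ev_ge_of_liminf_pos (fun n => hammDist_nonneg _ _ _) (hsep g hg)
    have hble : ∀ n, hsDist (k n) (pU (k n) (φ n g)) 1 ≤ Real.sqrt 2 := by
      intro n
      rw [hdist n]
      apply Real.sqrt_le_sqrt
      nlinarith [hammDist_le_one (k n) (φ n g) 1, hammDist_nonneg (k n) (φ n g) 1]
    apply liminf_pos_of_ev_ge hble (c := Real.sqrt (2 * c))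
      (Real.sqrt_pos.mpr (by linarith))
    refine hev.mono fun n hn => ?_
    rw [hdist n]
    apply Real.sqrt_le_sqrt
    nlinarith

lemma unitary_to_lef (Γ : Type*) [Group Γ]
    (h : ∃ (k : ℕ → ℕ) (φ : ∀ n, Γ → UGp (k n)), IsPartialHom φ ∧
      ∀ g : Γ, g ≠ 1 →
        0 < Filter.liminf (fun n => hsDist (k n) (φ n g) 1) Filter.atTop) :
    IsLEF Γ := by
  classical
  obtain ⟨k₀, φ, hpart, hsep⟩ := h
  intro B
  -- the enlarged finite set
  set E : Finset Γ := B⁻¹ * B with hE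
  set D : Finset Γ := B ∪ E with hD
  -- choose a good index n
  have hmultev : ∀ᶠ n in atTop, ∀ p ∈ D ×ˢ D, φ n (p.1 * p.2) = φ n p.1 * φ n p.2 := by
    rw [eventually_all_finset]
    rintro ⟨g, h⟩ _
    obtain ⟨N, hN⟩ := hpart g h
    exact eventually_atTop.mpr ⟨N, fun n hn => hN n hn⟩
  have hsepev : ∀ᶠ n in atTop, ∀ d ∈ E.filter (· ≠ 1),
      ((φ n d : UGp (k₀ n)) : Matrix (Fin (k₀ n)) (Fin (k₀ n)) ℂ) ≠ 1 := by
    rw [eventually_all_finset]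
    intro d hd
    have hd1 : d ≠ 1 := (Finset.mem_filter.mp hd).2
    have := ev_ne_of_liminf_pos (fun n => hsDist_nonneg _ _ _) (hsep d hd1)
    refine this.mono fun n hn hne => ?_
    exact hn (by rw [hne]; exact hsDist_self _ _)
  obtain ⟨n, hmult, hsepn⟩ := (hmultev.and hsepev).exists
  set k : ℕ := k₀ n with hk
  set U : Γ → Matrix (Fin k) (Fin k) ℂ := fun g => ((φ n g : UGp k) : Matrix (Fin k) (Fin k) ℂ)
    with hU
  have hBD : B ⊆ D := Finset.subset_union_left
  have hED : E ⊆ D := Finset.subset_union_right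
  have hUmul : ∀ g ∈ D, ∀ h ∈ D, U (g * h) = U g * U h := by
    intro g hg h hh
    have := hmult (g, h) (Finset.mem_product.mpr ⟨hg, hh⟩)
    rw [hU]
    simp only [this, Submonoid.coe_mul]
  -- injectivity of U on B
  have hUinj : ∀ g ∈ B, ∀ h ∈ B, g ≠ h → U g ≠ U h := by
    intro g hg h hh hgh hUeq
    have hφeq : φ n g = φ n h := Subtype.ext hUeq
    set d : Γ := g⁻¹ * h with hd
    have hdE : d ∈ E := Finset.mul_mem_mul (Finset.inv_mem_inv hg) hh
    have hd1 : d ≠ 1 := by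
      rw [hd, Ne, inv_mul_eq_one]
      exact hgh
    have hm := hmult (g, d) (Finset.mem_product.mpr ⟨hBD hg, hED hdE⟩)
    simp only [hd, mul_inv_cancel_left] at hm
    -- hm : φ n h = φ n g * φ n d
    have : φ n d = 1 := by
      rw [hφeq] at hm
      exact (left_eq_mul.mp hm).symm ▸ rfl
    have := hsepn d (Finset.mem_filter.mpr ⟨hdE, hd1⟩)
    rw [‹φ n d = 1›] at this
    exact this rfl
  -- the finitely generated subalgebra containing all relevant entries
  set s : Set ℂ := ⋃ g ∈ (D : Set Γ),
      (Set.range (fun p : Fin k × Fin k => U g p.1 p.2) ∪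
       Set.range (fun p : Fin k × Fin k => star (U g p.1 p.2))) with hs
  have hsfin : s.Finite :=
    Set.Finite.biUnion D.finite_toSet
      (fun g _ => (Set.finite_range _).union (Set.finite_range _))
  set A : Subalgebra ℤ ℂ := Algebra.adjoin ℤ s with hA
  have hAfg : A.FG := by
    rw [hA, ← hsfin.coe_toFinset]
    exact Subalgebra.fg_adjoin_finset _
  haveI hAft : Algebra.FiniteType ℤ A := (Subalgebra.fg_iff_finiteType A).mp hAfg
  have hUA : ∀ g ∈ D, ∀ i j, U g i j ∈ A := by
    intro g hg i j
    apply Algebra.subset_adjoin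
    exact Set.mem_biUnion hg (Or.inl ⟨(i, j), rfl⟩)
  have hUAstar : ∀ g ∈ D, ∀ i j, star (U g i j) ∈ A := by
    intro g hg i j
    apply Algebra.subset_adjoin
    exact Set.mem_biUnion hg (Or.inr ⟨(i, j), rfl⟩)
  have hUABmul : ∀ g ∈ B, ∀ h ∈ B, ∀ i j, U (g * h) i j ∈ A := by
    intro g hg h hh i j
    rw [hUmul g (hBD hg) h (hBD hh), Matrix.mul_apply]
    exact Subalgebra.sum_mem A fun l _ => mul_mem (hUA g (hBD hg) i l) (hUA h (hBD hh) l j)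
  -- the entry-selection function and the product of differences
  set pairs : Finset (Γ × Γ) := (B ×ˢ B).filter (fun p => p.1 ≠ p.2) with hpairs
  set c : Γ × Γ → ℂ := fun p =>
    if hex : ∃ q : Fin k × Fin k, U p.1 q.1 q.2 ≠ U p.2 q.1 q.2 then
      U p.1 hex.choose.1 hex.choose.2 - U p.2 hex.choose.1 hex.choose.2
    else 1 with hc
  have hc0 : ∀ p, c p ≠ 0 := by
    intro p
    simp only [hc]
    split_ifs with hex
    · exact sub_ne_zero.mpr hex.choose_spec
    · exact one_ne_zero
  have hcA : ∀ p ∈ pairs, c p ∈ A := by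
    intro p hp
    have hp1 : p.1 ∈ B := (Finset.mem_product.mp (Finset.mem_filter.mp hp).1).1
    have hp2 : p.2 ∈ B := (Finset.mem_product.mp (Finset.mem_filter.mp hp).1).2
    simp only [hc]
    split_ifs with hex
    · exact sub_mem (hUA p.1 (hBD hp1) _ _) (hUA p.2 (hBD hp2) _ _)
    · exact one_mem A
  set a : ℂ := ∏ p ∈ pairs, c p with ha
  have haA : a ∈ A := Subalgebra.prod_mem A fun p hp => hcA p hp
  have ha0 : a ≠ 0 := Finset.prod_ne_zero_iff.mpr fun p _ => hc0 p
  obtain ⟨K, instK, instKfin, ψ, hψa⟩ :=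
    exists_hom_finField A ⟨a, haA⟩ (by simp [Subtype.ext_iff, ha0])
  -- matrices over A and over K
  set χ : ℂ → A := fun z => if h : z ∈ A then ⟨z, h⟩ else 0 with hχ
  set ι : A →+* ℂ := A.val.toRingHom with hι
  have hιχ : ∀ (M : Matrix (Fin k) (Fin k) ℂ), (∀ i j, M i j ∈ A) →
      ((M.map χ).map ι) = M := by
    intro M hM
    ext i j
    simp only [Matrix.map_apply, hχ, dif_pos (hM i j)]
    rfl
  have hιinj : Function.Injective (fun M : Matrix (Fin k) (Fin k) A => M.map ι) := by
    intro M N hMN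
    ext i j
    have := congrFun (congrFun hMN i) j
    simp only [Matrix.map_apply] at this
    exact this
  set V : Γ → Matrix (Fin k) (Fin k) A := fun g => (U g).map χ with hV
  set W : Γ → Matrix (Fin k) (Fin k) K := fun g => (V g).map ψ with hW
  have hmapmul : ∀ (M N : Matrix (Fin k) (Fin k) A), (M * N).map ι = M.map ι * N.map ι :=
    fun M N => Matrix.map_mul
  have hVmul : ∀ g ∈ B, ∀ h ∈ B, V (g * h) = V g * V h := by
    intro g hg h hh
    apply hιinj
    simp only []
    rw [hmapmul, hV]
    simp only []
    rw [hιχ (U (g*h)) (hUABmul g hg h hh), hιχ (U g) (hUA g (hBD hg)),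
      hιχ (U h) (hUA h (hBD hh))]
    exact hUmul g (hBD hg) h (hBD hh)
  have hWmul : ∀ g ∈ B, ∀ h ∈ B, W (g * h) = W g * W h := by
    intro g hg h hh
    rw [hW]
    simp only []
    rw [hVmul g hg h hh, Matrix.map_mul]
  -- invertibility
  have hVinv : ∀ g ∈ B, V g * ((U g)ᴴ).map χ = 1 ∧ ((U g)ᴴ).map χ * V g = 1 := by
    intro g hg
    have hstar : ∀ i j, (U g)ᴴ i j ∈ A := fun i j => hUAstar g (hBD hg) j i
    have hmem := (φ n g).2
    rw [Matrix.mem_unitaryGroup_iff'] at hmem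
    -- hmem : star (U g) * U g = 1  (check orientation)
    constructor
    · apply hιinj
      simp only []
      rw [hmapmul, hιχ (U g) (hUA g (hBD hg)), hιχ ((U g)ᴴ) hstar, Matrix.map_one ι ι.map_zero ι.map_one]
      rw [← Matrix.star_eq_conjTranspose]
      exact Matrix.mem_unitaryGroup_iff.mp (φ n g).2
    · apply hιinj
      simp only []
      rw [hmapmul, hιχ (U g) (hUA g (hBD hg)), hιχ ((U g)ᴴ) hstar, Matrix.map_one ι ι.map_zero ι.map_one]
      rw [← Matrix.star_eq_conjTranspose]
      exact Matrix.mem_unitaryGroup_iff'.mp (φ n g).2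
  have hWunit : ∀ g ∈ B, IsUnit (W g) := by
    intro g hg
    refine ⟨⟨W g, (((U g)ᴴ).map χ).map ψ, ?_, ?_⟩, rfl⟩
    · rw [hW]; simp only []
      rw [← Matrix.map_mul, (hVinv g hg).1, Matrix.map_one ψ ψ.map_zero ψ.map_one]
    · rw [hW]; simp only []
      rw [← Matrix.map_mul, (hVinv g hg).2, Matrix.map_one ψ ψ.map_zero ψ.map_one]
  -- injectivity of W on B
  have hψc : ∀ p (hp : p ∈ pairs), ψ (⟨c p, hcA p hp⟩ : A) ≠ 0 := by
    intro p hp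
    have hdA : (∏ q ∈ pairs.erase p, c q) ∈ A :=
      Subalgebra.prod_mem A fun q hq => hcA q (Finset.mem_of_mem_erase hq)
    have key : (⟨a, haA⟩ : A) = ⟨c p, hcA p hp⟩ * ⟨∏ q ∈ pairs.erase p, c q, hdA⟩ := by
      apply Subtype.ext
      rw [MulMemClass.coe_mul]
      show a = c p * ∏ q ∈ pairs.erase p, c q
      rw [ha, Finset.mul_prod_erase pairs c hp]
    intro h0
    apply hψa
    rw [key, RingHom.map_mul ψ, h0, zero_mul]
  have hWinj : ∀ g ∈ B, ∀ h ∈ B, g ≠ h → W g ≠ W h := by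
    intro g hg h hh hgh hWeq
    have hex : ∃ q : Fin k × Fin k, U g q.1 q.2 ≠ U h q.1 q.2 := by
      by_contra hq
      push_neg at hq
      exact hUinj g hg h hh hgh (by ext i j; exact hq (i, j))
    have hp : ((g, h) : Γ × Γ) ∈ pairs :=
      Finset.mem_filter.mpr ⟨Finset.mem_product.mpr ⟨hg, hh⟩, hgh⟩
    have hcp : c (g, h) = U g hex.choose.1 hex.choose.2 - U h hex.choose.1 hex.choose.2 := by
      rw [hc]; simp only []
      rw [dif_pos hex]
    set i0 := hex.choose.1
    set j0 := hex.choose.2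
    have hWg : W g i0 j0 = ψ ⟨U g i0 j0, hUA g (hBD hg) i0 j0⟩ := by
      rw [hW, hV]
      simp only [Matrix.map_apply, hχ, dif_pos (hUA g (hBD hg) i0 j0)]
    have hWh : W h i0 j0 = ψ ⟨U h i0 j0, hUA h (hBD hh) i0 j0⟩ := by
      rw [hW, hV]
      simp only [Matrix.map_apply, hχ, dif_pos (hUA h (hBD hh) i0 j0)]
    have : W g i0 j0 - W h i0 j0 = ψ ⟨c (g, h), hcA (g, h) hp⟩ := by
      rw [hWg, hWh, ← RingHom.map_sub ψ]
      congr 1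
      apply Subtype.ext
      push_cast
      rw [hcp]
    have hne : W g i0 j0 ≠ W h i0 j0 := by
      intro heq
      apply hψc (g, h) hp
      rw [← this, heq, sub_self]
    exact hne (by rw [hWeq])
  -- assemble
  set θ : Γ → (Matrix (Fin k) (Fin k) K)ˣ := fun g =>
    if hu : IsUnit (W g) then hu.unit else 1 with hθ
  have hθcoe : ∀ g ∈ B, (θ g : Matrix (Fin k) (Fin k) K) = W g := by
    intro g hg
    rw [hθ]
    simp only [dif_pos (hWunit g hg)]
    exact (hWunit g hg).unit_spec
  refine ⟨(Matrix (Fin k) (Fin k) K)ˣ, inferInstance, inferInstance, θ, ?_, ?_⟩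
  · intro g hg h hh hθeq
    by_contra hgh
    apply hWinj g hg h hh hgh
    rw [← hθcoe g hg, ← hθcoe h hh, hθeq]
  · intro g hg h hh
    have hu : IsUnit (W (g * h)) := by
      rw [hWmul g hg h hh]
      exact (hWunit g hg).mul (hWunit h hh)
    apply Units.ext
    rw [hθ]
    simp only [dif_pos hu, dif_pos (hWunit g hg), dif_pos (hWunit h hh)]
    rw [Units.val_mul, IsUnit.unit_spec, IsUnit.unit_spec, IsUnit.unit_spec]
    exact hWmul g hg h hh


/-- A countable group is LEF iff it admits a separating partial homomorphism into
the symmetric groups with normalized Hamming distance, iff it admits a separating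
partial homomorphism into the unitary groups with normalized Hilbert–Schmidt norm. -/
theorem lef_tfae_separating_partialHom (Γ : Type*) [Group Γ] [Countable Γ] :
    List.TFAE
      [IsLEF Γ,
       ∃ (k : ℕ → ℕ) (φ : ∀ n, Γ → Equiv.Perm (Fin (k n))), IsPartialHom φ ∧
         ∀ g : Γ, g ≠ 1 →
           0 < Filter.liminf (fun n => hammDist (k n) (φ n g) 1) Filter.atTop,
       ∃ (k : ℕ → ℕ) (φ : ∀ n, Γ → UGp (k n)), IsPartialHom φ ∧
         ∀ g : Γ, g ≠ 1 →
           0 < Filter.liminf (fun n => hsDist (k n) (φ n g) 1) Filter.atTop] := by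
  tfae_have 1 → 2 := lef_to_perm Γ
  tfae_have 2 → 3 := perm_to_unitary Γ
  tfae_have 3 → 1 := unitary_to_lef Γ
  tfae_finish

end
end

section
/- Let Γ be a finitely presented group, let (G_n) be a sequence of groups, and let φ_n : Γ → G_n be a partial homomorphism. Then there exists a sequence of genuine group homomorphisms ψ_n : Γ → G_n such that for every g ∈ Γ there exists N ∈ ℕ with φ_n(g) = ψ_n(g) for all n ≥ N. -/
open Filter Matrix
open scoped ComplexOrder

noncomputable section

/-- Every partial homomorphism of a finitely presented group is eventually equal,
pointwise, to a sequence of genuine homomorphisms. -/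
theorem partialHom_eventually_eq_hom {Γ : Type*} [Group Γ] (hΓ : IsFinitelyPresented Γ)
    (G : ℕ → Type*) [∀ n, Group (G n)] (φ : ∀ n, Γ → G n) (hφ : IsPartialHom φ) :
    ∃ ψ : ∀ n, Γ →* G n, ∀ g : Γ, ∃ N : ℕ, ∀ n ≥ N, φ n g = ψ n g := by
  obtain ⟨m, π, R, hsurj, hker⟩ := hΓ
  set f : ∀ n, Fin m → G n := fun n i => φ n (π (FreeGroup.of i)) with hf
  have h1 : ∃ N, ∀ n ≥ N, φ n (1 : Γ) = 1 := by
    obtain ⟨N, hN⟩ := hφ 1 1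
    refine ⟨N, fun n hn => ?_⟩
    have := hN n hn
    rw [mul_one] at this
    exact right_eq_mul.mp this
  have hinv : ∀ g : Γ, ∃ N, ∀ n ≥ N, φ n g⁻¹ = (φ n g)⁻¹ := by
    intro g
    obtain ⟨N1, hN1⟩ := h1
    obtain ⟨N2, hN2⟩ := hφ g g⁻¹
    refine ⟨max N1 N2, fun n hn => ?_⟩
    have e1 := hN1 n (le_trans (le_max_left _ _) hn)
    have e2 := hN2 n (le_trans (le_max_right _ _) hn)
    rw [mul_inv_cancel, e1] at e2
    exact (eq_inv_of_mul_eq_one_right e2.symm)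
  have hE : ∀ w : FreeGroup (Fin m), ∃ N, ∀ n ≥ N,
      FreeGroup.lift (f n) w = φ n (π w) := by
    intro w
    induction w using FreeGroup.induction_on with
    | C1 =>
      obtain ⟨N, hN⟩ := h1
      exact ⟨N, fun n hn => by simp [hN n hn]⟩
    | of x => exact ⟨0, fun n _ => FreeGroup.lift_apply_of⟩
    | inv_of x ih =>
      obtain ⟨N1, hN1⟩ := ih
      obtain ⟨N2, hN2⟩ := hinv (π (FreeGroup.of x))
      refine ⟨max N1 N2, fun n hn => ?_⟩
      have e1 := hN1 n (le_trans (le_max_left _ _) hn)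
      have e2 := hN2 n (le_trans (le_max_right _ _) hn)
      rw [map_inv, map_inv, e1]
      exact e2.symm
    | mul w₁ w₂ ih₁ ih₂ =>
      obtain ⟨N1, hN1⟩ := ih₁
      obtain ⟨N2, hN2⟩ := ih₂
      obtain ⟨N3, hN3⟩ := hφ (π w₁) (π w₂)
      refine ⟨max N1 (max N2 N3), fun n hn => ?_⟩
      have e1 := hN1 n (le_trans (le_max_left _ _) hn)
      have e2 := hN2 n (le_trans (le_trans (le_max_left _ _) (le_max_right _ _)) hn)
      have e3 := hN3 n (le_trans (le_trans (le_max_right _ _) (le_max_right _ _)) hn)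
      rw [_root_.map_mul, _root_.map_mul, e1, e2, ← e3]
  have hRker : ∀ r ∈ R, π r = 1 := by
    intro r hr
    have : r ∈ π.ker := by
      rw [hker]; exact Subgroup.subset_normalClosure hr
    exact this
  choose N' hN' using hE
  obtain ⟨N1, hN1⟩ := h1
  set N₀ := max N1 (R.sup N') with hN₀
  have hR : ∀ n ≥ N₀, ∀ r ∈ R, FreeGroup.lift (f n) r = 1 := by
    intro n hn r hr
    have e := hN' r n (le_trans (le_trans (Finset.le_sup hr) (le_max_right _ _)) hn)
    rw [e, hRker r hr, hN1 n (le_trans (le_max_left _ _) hn)]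
  have hle : ∀ n, N₀ ≤ n → π.ker ≤ (FreeGroup.lift (f n)).ker := by
    intro n hn
    rw [hker]
    refine Subgroup.normalClosure_le_normal ?_
    intro r hr
    exact MonoidHom.mem_ker.mpr (hR n hn r hr)
  set σ := Function.surjInv hsurj with hσdef
  have hσ : Function.RightInverse σ π := Function.rightInverse_surjInv hsurj
  refine ⟨fun n => if h : N₀ ≤ n then
      π.liftOfRightInverse σ hσ ⟨FreeGroup.lift (f n), hle n h⟩ else 1, ?_⟩
  intro g
  obtain ⟨w, rfl⟩ := hsurj g
  refine ⟨max N₀ (N' w), fun n hn => ?_⟩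
  have h0 : N₀ ≤ n := le_trans (le_max_left _ _) hn
  simp only [dif_pos h0, MonoidHom.liftOfRightInverse_comp_apply]
  exact (hN' w n (le_trans (le_max_right _ _) hn)).symm

end
end

section
/- Let G = (G_n, d_n) be a sequence of metric groups and let Γ be a finitely presented group. Then Γ is locally G-stable if and only if Γ is G-stable. -/
open Filter Matrix
open scoped ComplexOrder

noncomputable section

/-- A sequence of metric groups has bi-invariant metrics if each distance is both
left- and right-invariant. -/
def BiInvariantMetrics (G : ℕ → Type*) [∀ n, Group (G n)] [∀ n, MetricSpace (G n)] : Prop :=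
  ∀ (n : ℕ) (g x y : G n), dist (g * x) (g * y) = dist x y ∧ dist (x * g) (y * g) = dist x y

/-- An approximate homomorphism into a sequence of metric groups:
`d(φ_n(gh), φ_n(g)φ_n(h)) → 0` for all `g, h ∈ Γ`. -/
def IsApproxHomG {Γ : Type*} [Group Γ] (G : ℕ → Type*) [∀ n, Group (G n)]
    [∀ n, MetricSpace (G n)] (k : ℕ → ℕ) (φ : ∀ n, Γ → G (k n)) : Prop :=
  ∀ g h : Γ, Filter.Tendsto (fun n => dist (φ n (g * h)) (φ n g * φ n h)) Filter.atTop (nhds 0)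

/-- Two sequences of maps into a sequence of metric groups are close if the
distances at every group element tend to `0`. -/
def CloseG {Γ : Type*} [Group Γ] (G : ℕ → Type*) [∀ n, Group (G n)]
    [∀ n, MetricSpace (G n)] (k : ℕ → ℕ) (φ ψ : ∀ n, Γ → G (k n)) : Prop :=
  ∀ g : Γ, Filter.Tendsto (fun n => dist (φ n g) (ψ n g)) Filter.atTop (nhds 0)

/-- `Γ` is `G`-stable: every approximate homomorphism is close to a sequence
of genuine homomorphisms. -/
def IsGStable (G : ℕ → Type*) [∀ n, Group (G n)] [∀ n, MetricSpace (G n)]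
    (Γ : Type*) [Group Γ] : Prop :=
  ∀ (k : ℕ → ℕ) (φ : ∀ n, Γ → G (k n)), IsApproxHomG G k φ →
    ∃ ψ : ∀ n, Γ →* G (k n), CloseG G k φ (fun n g => ψ n g)

/-- `Γ` is locally `G`-stable: every approximate homomorphism is close to a
partial homomorphism. -/
def IsLocallyGStable (G : ℕ → Type*) [∀ n, Group (G n)] [∀ n, MetricSpace (G n)]
    (Γ : Type*) [Group Γ] : Prop :=
  ∀ (k : ℕ → ℕ) (φ : ∀ n, Γ → G (k n)), IsApproxHomG G k φ →
    ∃ ψ : ∀ n, Γ → G (k n), IsPartialHom ψ ∧ CloseG G k φ ψ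

section AuxPartial

variable {Γ : Type*} [Group Γ] {H : ℕ → Type*} [∀ n, Group (H n)]

lemma IsPartialHom.eventually_mul {ψ : ∀ n, Γ → H n} (hψ : IsPartialHom ψ) (g h : Γ) :
    ∀ᶠ n in atTop, ψ n (g * h) = ψ n g * ψ n h := by
  obtain ⟨N, hN⟩ := hψ g h
  exact Filter.eventually_atTop.2 ⟨N, hN⟩

lemma IsPartialHom.eventually_one {ψ : ∀ n, Γ → H n} (hψ : IsPartialHom ψ) :
    ∀ᶠ n in atTop, ψ n 1 = 1 := by
  filter_upwards [hψ.eventually_mul 1 1] with n hn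
  have h : ψ n 1 = ψ n 1 * ψ n 1 := by simpa using hn
  exact (left_eq_mul.mp h)

lemma IsPartialHom.eventually_inv {ψ : ∀ n, Γ → H n} (hψ : IsPartialHom ψ) (g : Γ) :
    ∀ᶠ n in atTop, ψ n g⁻¹ = (ψ n g)⁻¹ := by
  filter_upwards [hψ.eventually_mul g g⁻¹, hψ.eventually_one] with n h1 h2
  have h : ψ n g * ψ n g⁻¹ = 1 := by
    rw [← h1]; simpa using h2
  exact eq_inv_of_mul_eq_one_right h

lemma IsPartialHom.eventually_lift {ψ : ∀ n, Γ → H n} (hψ : IsPartialHom ψ)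
    {m : ℕ} (π : FreeGroup (Fin m) →* Γ) (w : FreeGroup (Fin m)) :
    ∀ᶠ n in atTop,
      (FreeGroup.lift (fun i => ψ n (π (FreeGroup.of i)))) w = ψ n (π w) := by
  induction w using FreeGroup.induction_on with
  | C1 =>
    filter_upwards [hψ.eventually_one] with n hn
    simpa using hn.symm
  | of x =>
    filter_upwards with n
    exact FreeGroup.lift_apply_of
  | inv_of x _ =>
    filter_upwards [hψ.eventually_inv (π (FreeGroup.of x))] with n h2
    have h4 : (FreeGroup.lift fun i => ψ n (π (FreeGroup.of i))) (FreeGroup.of x)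
        = ψ n (π (FreeGroup.of x)) := FreeGroup.lift_apply_of
    rw [map_inv, map_inv, h2, h4]
  | mul x y ihx ihy =>
    filter_upwards [ihx, ihy,
      hψ.eventually_mul (π x) (π y)] with n h1 h2 h3
    rw [_root_.map_mul, _root_.map_mul, h1, h2, h3]

end AuxPartial

/-- A finitely presented group is locally `G`-stable iff it is `G`-stable. -/
theorem locallyGStable_iff_gStable_of_finitelyPresented {Γ : Type*} [Group Γ]
    (hΓ : IsFinitelyPresented Γ)
    (G : ℕ → Type*) [∀ n, Group (G n)] [∀ n, MetricSpace (G n)]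
    (hbi : BiInvariantMetrics G) :
    IsLocallyGStable G Γ ↔ IsGStable G Γ := by
  constructor
  · intro hloc k φ hφ
    obtain ⟨ψ, hpart, hclose⟩ := hloc k φ hφ
    obtain ⟨m, π, R, hsurj, hker⟩ := hΓ
    set finv := Function.surjInv hsurj with hfinv_def
    have hfinv : Function.RightInverse finv π := Function.rightInverse_surjInv hsurj
    set χ : ∀ n, FreeGroup (Fin m) →* G (k n) :=
      fun n => FreeGroup.lift (fun i => ψ n (π (FreeGroup.of i))) with hχ
    have hrel : ∀ᶠ n in atTop, ∀ r ∈ R, χ n r = 1 := by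
      rw [Filter.eventually_all_finset R]
      intro r hr
      have hπr : π r = 1 := by
        have hmem : r ∈ π.ker := by
          rw [hker]; exact Subgroup.subset_normalClosure hr
        exact hmem
      filter_upwards [hpart.eventually_lift π r, hpart.eventually_one] with n h1 h2
      rw [hχ]
      simp only
      rw [h1, hπr, h2]
    obtain ⟨N₀, hN₀⟩ := Filter.eventually_atTop.mp hrel
    have hkerle : ∀ n, N₀ ≤ n → π.ker ≤ (χ n).ker := by
      intro n hn
      rw [hker]
      exact Subgroup.normalClosure_le_normal (fun r hr => hN₀ n hn r hr)
    refine ⟨fun n =>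
      if h : N₀ ≤ n then
        π.liftOfRightInverse finv hfinv ⟨χ n, fun a ha => (hkerle n h) ha⟩
      else 1, ?_⟩
    intro g
    have hg : π (finv g) = g := hfinv g
    have hev : ∀ᶠ n in atTop,
        (if h : N₀ ≤ n then
          π.liftOfRightInverse finv hfinv ⟨χ n, fun a ha => (hkerle n h) ha⟩
        else 1) g = ψ n g := by
      filter_upwards [hpart.eventually_lift π (finv g),
        Filter.eventually_ge_atTop N₀] with n h1 h2
      rw [dif_pos h2]
      have h3 : (π.liftOfRightInverse finv hfinv
          ⟨χ n, fun a ha => (hkerle n h2) ha⟩) (π (finv g)) = χ n (finv g) :=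
        π.liftOfRightInverse_comp_apply finv hfinv _ _
      rw [hg] at h3
      rw [h3]
      rw [hχ] at *
      simp only at h1 ⊢
      rw [h1, hg]
    exact (hclose g).congr' (hev.mono fun n hn => congrArg (dist (φ n g)) hn.symm)
  · intro hst k φ hφ
    obtain ⟨ψ, hclose⟩ := hst k φ hφ
    exact ⟨fun n g => ψ n g, fun g h => ⟨0, fun n _ => map_mul (ψ n) g h⟩, hclose⟩

end
end

section
/- Let Γ be a countable group written as a directed union of subgroups (Γ_i)_{i ∈ ℕ}, let G = (G_n, d_n) be a sequence of metric groups, and suppose that each Γ_i is locally G-stable relative to Γ. Then Γ is locally G-stable. In particular, a directed union of locally G-stable groups is locally G-stable. -/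
open Filter Matrix
open scoped ComplexOrder

noncomputable section

/-- A subgroup `H ≤ Γ` is locally `G`-stable relative to `Γ` if for every approximate
homomorphism of `Γ`, the restriction to `H` is close to a partial homomorphism of `H`. -/
def IsLocallyGStableRel (G : ℕ → Type*) [∀ n, Group (G n)] [∀ n, MetricSpace (G n)]
    {Γ : Type*} [Group Γ] (H : Subgroup Γ) : Prop :=
  ∀ (k : ℕ → ℕ) (φ : ∀ n, Γ → G (k n)), IsApproxHomG G k φ →
    ∃ ψ : ∀ n, ↥H → G (k n), IsPartialHom ψ ∧
      ∀ s : ↥H, Filter.Tendsto (fun n => dist (φ n (s : Γ)) (ψ n s)) Filter.atTop (nhds 0)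

/-- If a countable group `Γ` is the directed union of subgroups `Γ_i`, each locally
`G`-stable relative to `Γ`, then `Γ` is locally `G`-stable. -/
theorem isLocallyGStable_of_directed_union {Γ : Type*} [Group Γ] [Countable Γ]
    (G : ℕ → Type*) [∀ n, Group (G n)] [∀ n, MetricSpace (G n)]
    (hbi : BiInvariantMetrics G) (H : ℕ → Subgroup Γ)
    (hdir : ∀ i j : ℕ, ∃ l, H i ≤ H l ∧ H j ≤ H l)
    (hcover : ∀ g : Γ, ∃ i, g ∈ H i)
    (hrel : ∀ i, IsLocallyGStableRel G (H i)) :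
    IsLocallyGStable G Γ := by
  classical
  intro k φ hφ
  obtain ⟨e, he⟩ := exists_surjective_nat Γ
  -- build an increasing chain of subgroups covering the enumeration
  let J : ℕ → ℕ := fun i => Nat.rec ((hcover (e 0)).choose)
    (fun i Ji => (hdir Ji (hcover (e (i+1))).choose).choose) i
  have hJ0 : e 0 ∈ H (J 0) := (hcover (e 0)).choose_spec
  have hJstep : ∀ i, H (J i) ≤ H (J (i+1)) ∧ e (i+1) ∈ H (J (i+1)) := by
    intro i
    have h := (hdir (J i) (hcover (e (i+1))).choose).choose_spec
    exact ⟨h.1, h.2 (hcover (e (i+1))).choose_spec⟩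
  have hJle : ∀ i j : ℕ, i ≤ j → H (J i) ≤ H (J j) := by
    intro i j hij
    induction j, hij using Nat.le_induction with
    | base => exact le_rfl
    | succ j hij ih => exact ih.trans (hJstep j).1
  have he_mem : ∀ a i : ℕ, a ≤ i → e a ∈ H (J i) := by
    intro a i hai
    refine hJle a i hai ?_
    cases a with
    | zero => exact hJ0
    | succ b => exact (hJstep b).2
  -- partial homomorphisms on each subgroup from relative stability
  choose Ψ hΨpart hΨclose using fun i => hrel (J i) k φ hφ
  -- selection of elements of the subgroups
  let sel : ∀ i : ℕ, ℕ → ↥(H (J i)) := fun i a =>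
    if h : e a ∈ H (J i) then ⟨e a, h⟩ else 1
  have hsel : ∀ i a (hai : a ≤ i), sel i a = ⟨e a, he_mem a i hai⟩ := by
    intro i a hai
    simp only [sel, dif_pos (he_mem a i hai)]
  -- thresholds
  have hP : ∀ i : ℕ, ∃ N : ℕ, ∀ n ≥ N,
      (∀ a ∈ Finset.range (i+1), ∀ b ∈ Finset.range (i+1),
        Ψ i n (sel i a * sel i b) = Ψ i n (sel i a) * Ψ i n (sel i b)) ∧
      (∀ a ∈ Finset.range (i+1),
        dist (φ n (e a)) (Ψ i n (sel i a)) < 1 / (i + 1)) := by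
    intro i
    have h1 : ∀ᶠ n in atTop, ∀ a ∈ Finset.range (i+1), ∀ b ∈ Finset.range (i+1),
        Ψ i n (sel i a * sel i b) = Ψ i n (sel i a) * Ψ i n (sel i b) := by
      rw [Filter.eventually_all_finset]
      intro a _
      rw [Filter.eventually_all_finset]
      intro b _
      obtain ⟨N, hN⟩ := hΨpart i (sel i a) (sel i b)
      exact Filter.eventually_atTop.2 ⟨N, hN⟩
    have h2 : ∀ᶠ n in atTop, ∀ a ∈ Finset.range (i+1),
        dist (φ n (e a)) (Ψ i n (sel i a)) < 1 / (i + 1) := by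
      rw [Filter.eventually_all_finset]
      intro a ha
      have hai : a ≤ i := Nat.lt_succ_iff.1 (Finset.mem_range.1 ha)
      have hε : (0 : ℝ) < 1 / (i + 1) := by positivity
      have := (hΨclose i (sel i a)).eventually_lt_const hε
      refine this.mono fun n hn => ?_
      have hco : ((sel i a : ↥(H (J i))) : Γ) = e a := by rw [hsel i a hai]
      rwa [hco] at hn
    exact Filter.eventually_atTop.1 (h1.and h2)
  choose M hM using hP
  -- the time scale
  obtain ⟨T, hT0, hTsuc⟩ : ∃ T : ℕ → ℕ, T 0 = 0 ∧
      ∀ i, T (i+1) = max (T i + 1) (M (i+1)) :=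
    ⟨fun i => Nat.rec 0 (fun i Ti => max (Ti + 1) (M (i+1))) i, rfl, fun _ => rfl⟩
  have hTmono : StrictMono T :=
    strictMono_nat_of_lt_succ fun i => by
      rw [hTsuc]; exact lt_of_lt_of_le (Nat.lt_succ_self _) (le_max_left _ _)
  have hTM : ∀ i, M (i+1) ≤ T (i+1) := fun i => by
    rw [hTsuc]; exact le_max_right _ _
  let iN : ℕ → ℕ := fun n => Nat.findGreatest (fun i => T i ≤ n) n
  have hiN_spec : ∀ n, T (iN n) ≤ n := fun n =>
    Nat.findGreatest_spec (P := fun i => T i ≤ n) (Nat.zero_le n) (by simp [hT0])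
  have hiN_ge : ∀ A n : ℕ, T A ≤ n → A ≤ iN n := fun A n h =>
    Nat.le_findGreatest (P := fun i => T i ≤ n) (le_trans hTmono.le_apply h) h
  have hMn : ∀ n, 1 ≤ iN n → M (iN n) ≤ n := by
    intro n h1
    obtain ⟨j, hj⟩ := Nat.exists_eq_add_of_le h1
    have : M (iN n) ≤ T (iN n) := by
      rw [hj]; simpa [Nat.add_comm] using hTM j
    exact this.trans (hiN_spec n)
  -- the diagonal map
  let ψ : ∀ n, Γ → G (k n) := fun n g =>
    if h : g ∈ H (J (iN n)) then Ψ (iN n) n ⟨g, h⟩ else 1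
  have hψ_mem : ∀ n g (h : g ∈ H (J (iN n))), ψ n g = Ψ (iN n) n ⟨g, h⟩ :=
    fun n g h => dif_pos h
  refine ⟨ψ, ?_, ?_⟩
  · -- partial homomorphism
    intro g h
    obtain ⟨a, rfl⟩ := he g
    obtain ⟨b, rfl⟩ := he h
    refine ⟨T (max a b + 1), fun n hn => ?_⟩
    have hA : max a b + 1 ≤ iN n := hiN_ge _ n hn
    have ha : a ≤ iN n := le_trans (le_trans (le_max_left a b) (Nat.le_succ _)) hA
    have hb : b ≤ iN n := le_trans (le_trans (le_max_right a b) (Nat.le_succ _)) hA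
    have hga : e a ∈ H (J (iN n)) := he_mem a (iN n) ha
    have hgb : e b ∈ H (J (iN n)) := he_mem b (iN n) hb
    have hgab : e a * e b ∈ H (J (iN n)) := mul_mem hga hgb
    have hMi : M (iN n) ≤ n := hMn n (le_trans (Nat.succ_le_succ (Nat.zero_le _)) hA)
    have key := (hM (iN n) n hMi).1 a (Finset.mem_range.2 (Nat.lt_succ_of_le ha))
      b (Finset.mem_range.2 (Nat.lt_succ_of_le hb))
    have h1 : sel (iN n) a = ⟨e a, hga⟩ := hsel (iN n) a ha
    have h2 : sel (iN n) b = ⟨e b, hgb⟩ := hsel (iN n) b hb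
    have h3 : sel (iN n) a * sel (iN n) b = ⟨e a * e b, hgab⟩ := by
      rw [h1, h2]; rfl
    rw [hψ_mem n _ hgab, hψ_mem n _ hga, hψ_mem n _ hgb, ← h1, ← h2, ← h3, key]
  · -- closeness
    intro g
    obtain ⟨a, rfl⟩ := he g
    rw [Metric.tendsto_atTop]
    intro ε hε
    obtain ⟨B, hB⟩ := exists_nat_one_div_lt hε
    refine ⟨T (max a B + 1), fun n hn => ?_⟩
    have hA : max a B + 1 ≤ iN n := hiN_ge _ n hn
    have ha : a ≤ iN n := le_trans (le_trans (le_max_left a B) (Nat.le_succ _)) hA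
    have hBi : B + 1 ≤ iN n := le_trans (Nat.succ_le_succ (le_max_right a B)) hA
    have hMi : M (iN n) ≤ n := hMn n (le_trans (Nat.succ_le_succ (Nat.zero_le _)) hA)
    have key := (hM (iN n) n hMi).2 a (Finset.mem_range.2 (Nat.lt_succ_of_le ha))
    have hga : e a ∈ H (J (iN n)) := he_mem a (iN n) ha
    have h1 : sel (iN n) a = ⟨e a, hga⟩ := hsel (iN n) a ha
    have hψa : ψ n (e a) = Ψ (iN n) n (sel (iN n) a) := by
      rw [hψ_mem n _ hga, h1]
    have hd : dist (φ n (e a)) (ψ n (e a)) < 1 / (iN n + 1) := by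
      rw [hψa]; exact key
    have hle : (1 : ℝ) / (iN n + 1) ≤ 1 / (B + 1) := by
      apply one_div_le_one_div_of_le
      · positivity
      · have : (B : ℝ) + 1 ≤ (iN n : ℝ) := by exact_mod_cast hBi
        linarith
    have hnn : (0 : ℝ) ≤ dist (φ n (e a)) (ψ n (e a)) := dist_nonneg
    rw [Real.dist_eq, sub_zero, abs_of_nonneg hnn]
    exact lt_of_lt_of_le hd (hle.trans hB.le)

end
end

section
/- Let Γ be a countable group such that for every extremal character χ : Γ → ℂ there exists a partial homomorphism ψ_n : Γ → U(k_n) with τ_{k_n}(ψ_n(g)) → χ(g) for all g ∈ Γ. Then the same conclusion holds for every character χ of Γ: there exists a partial homomorphism ψ_n : Γ → U(k_n) with τ_{k_n}(ψ_n(g)) → χ(g) for all g ∈ Γ. -/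
open Filter Matrix
open scoped ComplexOrder

noncomputable section

namespace BlockAux

variable {r : ℕ} (K c : Fin r → ℕ)

def blockN : ℕ := ∑ i, c i * K i

abbrev BIdx := Σ p : (Σ i : Fin r, Fin (c i)), Fin (K p.1)

instance : Fintype (BIdx K c) := by unfold BIdx; infer_instance
instance : DecidableEq (BIdx K c) := by unfold BIdx; exact Sigma.instDecidableEqSigma

lemma card_BIdx : Fintype.card (BIdx K c) = blockN K c := by
  show Fintype.card (Σ p : (Σ i : Fin r, Fin (c i)), Fin (K p.1)) = _
  rw [Fintype.card_sigma]
  rw [← Finset.univ_sigma_univ, Finset.sum_sigma]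
  simp [blockN, mul_comm]

def bEquiv : BIdx K c ≃ Fin (blockN K c) :=
  (Fintype.equivFin _).trans (finCongr (card_BIdx K c))

def bigMat (U : ∀ i, Matrix (Fin (K i)) (Fin (K i)) ℂ) :
    Matrix (Fin (blockN K c)) (Fin (blockN K c)) ℂ :=
  (blockDiagonal' (fun p : (Σ i : Fin r, Fin (c i)) => U p.1)).submatrix
    (bEquiv K c).symm (bEquiv K c).symm

lemma bigMat_mul (U V : ∀ i, Matrix (Fin (K i)) (Fin (K i)) ℂ) :
    bigMat K c (fun i => U i * V i) = bigMat K c U * bigMat K c V := by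
  unfold bigMat
  rw [Matrix.submatrix_mul_equiv _ _ _ (bEquiv K c).symm _]
  rw [← Matrix.blockDiagonal'_mul]

lemma bigMat_conjTranspose (U : ∀ i, Matrix (Fin (K i)) (Fin (K i)) ℂ) :
    (bigMat K c U)ᴴ = bigMat K c (fun i => (U i)ᴴ) := by
  unfold bigMat
  rw [Matrix.conjTranspose_submatrix, Matrix.blockDiagonal'_conjTranspose]

lemma bigMat_one : bigMat K c (fun _ => 1) = 1 := by
  unfold bigMat
  rw [show (fun p : Σ i : Fin r, Fin (c i) =>
      (1 : Matrix (Fin (K p.1)) (Fin (K p.1)) ℂ)) = 1 from rfl]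
  rw [Matrix.blockDiagonal'_one]
  exact Matrix.submatrix_one_equiv (bEquiv K c).symm

lemma bigMat_unitary (U : ∀ i, UGp (K i)) :
    bigMat K c (fun i => (U i : Matrix (Fin (K i)) (Fin (K i)) ℂ)) ∈
      Matrix.unitaryGroup (Fin (blockN K c)) ℂ := by
  rw [Matrix.mem_unitaryGroup_iff, Matrix.star_eq_conjTranspose, bigMat_conjTranspose,
    ← bigMat_mul]
  have : (fun i => (U i : Matrix (Fin (K i)) (Fin (K i)) ℂ) * (U i : Matrix _ _ ℂ)ᴴ) =
      fun _ => (1 : Matrix _ _ ℂ) := by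
    funext i
    have := (U i).2
    rw [Unitary.mem_iff] at this
    simpa [Matrix.star_eq_conjTranspose] using this.2
  rw [this, bigMat_one]

lemma trace_bigMat (U : ∀ i, Matrix (Fin (K i)) (Fin (K i)) ℂ) :
    Matrix.trace (bigMat K c U) = ∑ i, (c i : ℂ) * Matrix.trace (U i) := by
  have h1 : Matrix.trace (bigMat K c U) =
      Matrix.trace (blockDiagonal' (fun p : (Σ i : Fin r, Fin (c i)) => U p.1)) := by
    unfold bigMat Matrix.trace
    simp only [Matrix.diag_apply, Matrix.submatrix_apply]
    exact Equiv.sum_comp (bEquiv K c).symm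
      (fun p => blockDiagonal' (fun q : (Σ i : Fin r, Fin (c i)) => U q.1) p p)
  rw [h1, Matrix.trace_blockDiagonal']
  rw [← Finset.univ_sigma_univ,
    Finset.sum_sigma (f := fun p : Σ i : Fin r, Fin (c i) => Matrix.trace (U p.1))]
  simp [Finset.sum_const, nsmul_eq_mul]
  refine Finset.sum_congr rfl fun i _ => ?_
  exact (Finset.sum_const (U i).trace).trans (by simp [nsmul_eq_mul])

def bigUnit (U : ∀ i, UGp (K i)) : UGp (blockN K c) :=
  ⟨bigMat K c (fun i => (U i : Matrix (Fin (K i)) (Fin (K i)) ℂ)), bigMat_unitary K c U⟩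

lemma bigUnit_mul (U V : ∀ i, UGp (K i)) :
    bigUnit K c (fun i => U i * V i) = bigUnit K c U * bigUnit K c V := by
  apply Subtype.ext
  exact bigMat_mul K c (fun i => (U i : Matrix (Fin (K i)) (Fin (K i)) ℂ))
    (fun i => (V i : Matrix (Fin (K i)) (Fin (K i)) ℂ))

lemma nTrace_bigUnit (U : ∀ i, UGp (K i)) (hK : ∀ i, 0 < K i) :
    nTrace (blockN K c) (bigUnit K c U) =
      ∑ i, ((c i * K i : ℕ) : ℂ) / (blockN K c : ℂ) *
        nTrace (K i) (U i) := by
  have : nTrace (blockN K c) (bigUnit K c U) =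
      (∑ i, (c i : ℂ) * Matrix.trace (U i : Matrix (Fin (K i)) (Fin (K i)) ℂ)) /
        (blockN K c : ℂ) := by
    unfold nTrace bigUnit
    rw [trace_bigMat]
  rw [this, Finset.sum_div]
  apply Finset.sum_congr rfl
  intro i _
  have hKi : ((K i : ℂ)) ≠ 0 := Nat.cast_ne_zero.mpr (hK i).ne'
  unfold nTrace
  push_cast
  rw [div_mul_div_comm, mul_comm ((blockN K c : ℂ)) ((K i : ℂ)), ← div_div]
  congr 1
  rw [mul_right_comm, mul_div_assoc, div_self hKi, mul_one]

end BlockAux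

namespace CharAux

variable {Γ : Type*} [Group Γ]

lemma IsCharacter.abs_le_one {χ : Γ → ℂ} (hχ : IsCharacter χ) (g : Γ) :
    ‖χ g‖ ≤ 1 := by
  obtain ⟨hpsd, _, h1⟩ := hχ
  have h := hpsd 2 ![1, g]
  set M : Matrix (Fin 2) (Fin 2) ℂ := Matrix.of fun i j => χ ((![1, g] i)⁻¹ * ![1, g] j) with hM
  have hherm : M.IsHermitian := h.1
  have h10 : M 1 0 = (starRingEnd ℂ) (M 0 1) := by
    conv_lhs => rw [← hherm]
    rfl
  have hq := h.dotProduct_mulVec_nonneg ![-(χ g), 1]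
  have hM00 : M 0 0 = 1 := by simp [hM, h1]
  have hM01 : M 0 1 = χ g := by simp [hM]
  have hM11 : M 1 1 = 1 := by simp [hM, h1]
  have hM10 : M 1 0 = (starRingEnd ℂ) (χ g) := by rw [h10, hM01]
  have hval : dotProduct (star ![-(χ g), 1]) (M *ᵥ ![-(χ g), 1]) =
      1 - (starRingEnd ℂ) (χ g) * χ g := by
    simp [dotProduct, Matrix.mulVec, Fin.sum_univ_two, hM00, hM01, hM10, hM11]
    ring
  rw [hval] at hq
  rw [Complex.nonneg_iff] at hq
  have hre : ((starRingEnd ℂ) (χ g) * χ g).re = ‖χ g‖ ^ 2 := by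
    rw [mul_comm, Complex.mul_conj]
    simp [Complex.sq_norm]
  have : ‖χ g‖ ^ 2 ≤ 1 := by
    have := hq.1
    simp only [Complex.sub_re, Complex.one_re] at this
    rw [hre] at this
    linarith
  nlinarith [norm_nonneg (χ g)]

def charSet (Γ : Type*) [Group Γ] : Set (Γ → ℂ) := {χ | IsCharacter χ}

lemma convex_charSet : Convex ℝ (charSet Γ) := by
  rintro χ₁ h1 χ₂ h2 a b ha hb hab
  obtain ⟨p1, c1, e1⟩ := h1
  obtain ⟨p2, c2, e2⟩ := h2
  refine ⟨fun m g => ?_, fun g h => ?_, ?_⟩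
  · obtain ⟨herm1, quad1⟩ := p1 m g
    obtain ⟨herm2, quad2⟩ := p2 m g
    have key : (Matrix.of fun i j => (a • χ₁ + b • χ₂) ((g i)⁻¹ * g j)) =
        (a : ℂ) • (Matrix.of fun i j => χ₁ ((g i)⁻¹ * g j)) +
        (b : ℂ) • (Matrix.of fun i j => χ₂ ((g i)⁻¹ * g j)) := by
      ext i j
      simp [Complex.real_smul]
    rw [key]
    refine Matrix.PosSemidef.of_dotProduct_mulVec_nonneg ?_ ?_
    · show _ᴴ = _
      rw [Matrix.conjTranspose_add, Matrix.conjTranspose_smul, Matrix.conjTranspose_smul,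
        herm1, herm2]
      simp [Complex.star_def, Complex.conj_ofReal]
    · intro x
      rw [Matrix.add_mulVec, Matrix.smul_mulVec, Matrix.smul_mulVec,
        dotProduct_add, dotProduct_smul, dotProduct_smul, smul_eq_mul, smul_eq_mul]
      have ha' : (0 : ℂ) ≤ (a : ℂ) := by exact_mod_cast Complex.zero_le_real.mpr ha
      have hb' : (0 : ℂ) ≤ (b : ℂ) := by exact_mod_cast Complex.zero_le_real.mpr hb
      exact add_nonneg (mul_nonneg ha' ((p1 m g).dotProduct_mulVec_nonneg x)) (mul_nonneg hb' ((p2 m g).dotProduct_mulVec_nonneg x))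
  · simp [Complex.real_smul, c1 g h, c2 g h]
  · simp [Complex.real_smul, e1, e2]
    push_cast
    exact_mod_cast congrArg (Complex.ofReal) hab

lemma isClosed_nonneg : IsClosed {z : ℂ | 0 ≤ z} := by
  have : {z : ℂ | 0 ≤ z} = {z : ℂ | 0 ≤ z.re} ∩ {z : ℂ | z.im = 0} := by
    ext z
    rw [Set.mem_setOf_eq, Complex.nonneg_iff]
    constructor
    · rintro ⟨h1, h2⟩; exact ⟨h1, h2.symm⟩
    · rintro ⟨h1, h2⟩; exact ⟨h1, h2.symm⟩
  rw [this]
  exact (isClosed_le continuous_const Complex.continuous_re).inter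
    (isClosed_eq Complex.continuous_im continuous_const)

lemma cont_quad (m : ℕ) (g : Fin m → Γ) (x : Fin m → ℂ) :
    Continuous fun χ : Γ → ℂ =>
      dotProduct (star x) ((Matrix.of fun i j => χ ((g i)⁻¹ * g j)) *ᵥ x) := by
  show Continuous fun χ : Γ → ℂ =>
    ∑ i, (star x) i * ∑ j, χ ((g i)⁻¹ * g j) * x j
  apply continuous_finset_sum
  intro i _
  apply Continuous.mul continuous_const
  apply continuous_finset_sum
  intro j _
  exact (continuous_apply _).mul continuous_const

lemma isClosed_charSet : IsClosed (charSet Γ) := by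
  have hset : charSet Γ =
      (⋂ (m : ℕ), ⋂ (g : Fin m → Γ), ⋂ (i : Fin m), ⋂ (j : Fin m),
        {χ : Γ → ℂ | star (χ ((g j)⁻¹ * g i)) = χ ((g i)⁻¹ * g j)}) ∩
      ((⋂ (m : ℕ), ⋂ (g : Fin m → Γ), ⋂ (x : Fin m → ℂ),
        {χ : Γ → ℂ | 0 ≤ dotProduct (star x) ((Matrix.of fun i j => χ ((g i)⁻¹ * g j)) *ᵥ x)}) ∩
      ((⋂ (g : Γ), ⋂ (h : Γ), {χ : Γ → ℂ | χ (g * h) = χ (h * g)}) ∩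
        {χ : Γ → ℂ | χ 1 = 1})) := by
    ext χ
    simp only [Set.mem_inter_iff, Set.mem_iInter, Set.mem_setOf_eq]
    constructor
    · rintro ⟨hp, hc, he⟩
      refine ⟨fun m g i j => ?_, fun m g x => (hp m g).dotProduct_mulVec_nonneg x, fun g h => hc g h, he⟩
      have := (hp m g).1
      have h2 := congrFun (congrFun this i) j
      simpa [Matrix.conjTranspose_apply] using h2
    · rintro ⟨hherm, hquad, hc, he⟩
      refine ⟨fun m g => Matrix.PosSemidef.of_dotProduct_mulVec_nonneg ?_ (hquad m g), hc, he⟩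
      ext i j
      rw [Matrix.conjTranspose_apply]
      exact hherm m g i j
  rw [hset]
  refine IsClosed.inter ?_ (IsClosed.inter ?_ (IsClosed.inter ?_ ?_))
  · exact isClosed_iInter fun m => isClosed_iInter fun g => isClosed_iInter fun i =>
      isClosed_iInter fun j => isClosed_eq (continuous_star.comp (continuous_apply _))
        (continuous_apply _)
  · exact isClosed_iInter fun m => isClosed_iInter fun g => isClosed_iInter fun x =>
      (isClosed_nonneg).preimage (cont_quad m g x)
  · exact isClosed_iInter fun g => isClosed_iInter fun h =>
      isClosed_eq (continuous_apply _) (continuous_apply _)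
  · exact isClosed_eq (continuous_apply 1) continuous_const

lemma isCompact_charSet : IsCompact (charSet Γ) := by
  refine IsCompact.of_isClosed_subset
    (isCompact_univ_pi fun _ : Γ => isCompact_closedBall (0 : ℂ) 1) isClosed_charSet ?_
  intro χ hχ
  intro g _
  simp only [Metric.mem_closedBall, Complex.dist_eq, sub_zero]
  exact IsCharacter.abs_le_one hχ g

lemma extremal_of_mem_extremePoints {χ : Γ → ℂ}
    (hx : χ ∈ Set.extremePoints ℝ (charSet Γ)) : IsExtremalCharacter χ := by
  obtain ⟨hmem, hkey⟩ := hx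
  refine ⟨hmem, fun t χ₁ χ₂ ht0 ht1 h1 h2 heq => ?_⟩
  have hseg : χ ∈ openSegment ℝ χ₁ χ₂ := by
    refine ⟨t, 1 - t, ht0, by linarith, by ring, ?_⟩
    funext g
    simp only [Pi.add_apply, Pi.smul_apply, Complex.real_smul]
    push_cast
    exact (heq g).symm
  exact ⟨hkey h1 h2 hseg, hkey h2 h1 (openSegment_symm ℝ χ₁ χ₂ ▸ hseg)⟩

lemma charSet_eq_closure :
    closure (convexHull ℝ (Set.extremePoints ℝ (charSet Γ))) = charSet Γ :=
  closure_convexHull_extremePoints isCompact_charSet convex_charSet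


variable {Γ : Type*} [Group Γ]

lemma nTrace_zero {k : ℕ} (hk : k = 0) (A : Matrix (Fin k) (Fin k) ℂ) :
    nTrace k A = 0 := by
  subst hk
  simp [nTrace, Matrix.trace]

lemma extremal_finite_approx {χ : Γ → ℂ}
    (happ : ∃ (k : ℕ → ℕ) (ψ : ∀ n, Γ → UGp (k n)),
      (∀ g h : Γ, ∃ N : ℕ, ∀ n ≥ N, ψ n (g * h) = ψ n g * ψ n h) ∧
        ∀ g : Γ, Tendsto (fun n => nTrace (k n) (ψ n g)) atTop (nhds (χ g)))
    (hχ1 : χ 1 = 1) (B : Finset Γ) {ε : ℝ} (hε : 0 < ε) :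
    ∃ (K : ℕ) (u : Γ → UGp K), 0 < K ∧
      (∀ g ∈ B, ∀ h' ∈ B, u (g * h') = u g * u h') ∧
      ∀ g ∈ B, ‖nTrace K (u g) - χ g‖ < ε := by
  obtain ⟨k, ψ, hph, htr⟩ := happ
  have E1 : ∀ᶠ n in atTop, ∀ g ∈ B, ∀ h' ∈ B, ψ n (g * h') = ψ n g * ψ n h' := by
    rw [Filter.eventually_all_finset]
    intro g _
    rw [Filter.eventually_all_finset]
    intro h' _
    obtain ⟨N, hN⟩ := hph g h'
    exact Filter.eventually_atTop.mpr ⟨N, hN⟩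
  have E2 : ∀ᶠ n in atTop, ∀ g ∈ B, ‖nTrace (k n) (ψ n g) - χ g‖ < ε := by
    rw [Filter.eventually_all_finset]
    intro g _
    have := Metric.tendsto_nhds.mp (htr g) ε hε
    simpa [Complex.dist_eq] using this
  have E3 : ∀ᶠ n in atTop, 0 < k n := by
    have h1 := Metric.tendsto_nhds.mp (htr 1) (1/2) (by norm_num)
    filter_upwards [h1] with n hn
    by_contra hk
    push_neg at hk
    have hk0 : k n = 0 := Nat.le_zero.mp hk
    rw [nTrace_zero hk0, hχ1] at hn
    simp [Complex.dist_eq] at hn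
    norm_num at hn
  obtain ⟨n, h1, h2, h3⟩ := (E1.and (E2.and E3)).exists
  exact ⟨k n, ψ n, h3, h1, h2⟩


lemma sum_reindex_c {ι : Type*} (t : Finset ι) (f : ι → ℂ) :
    ∑ i ∈ t, f i = ∑ j : Fin t.card, f ((t.equivFin.symm j : {x // x ∈ t}) : ι) := by
  rw [← Finset.sum_coe_sort t f]
  exact (Equiv.sum_comp t.equivFin.symm fun x => f ↑x).symm

lemma sum_reindex_r {ι : Type*} (t : Finset ι) (f : ι → ℝ) :
    ∑ i ∈ t, f i = ∑ j : Fin t.card, f ((t.equivFin.symm j : {x // x ∈ t}) : ι) := by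
  rw [← Finset.sum_coe_sort t f]
  exact (Equiv.sum_comp t.equivFin.symm fun x => f ↑x).symm

lemma char_finite_approx
    (h : ∀ χ : Γ → ℂ, IsExtremalCharacter χ →
      ∃ (k : ℕ → ℕ) (ψ : ∀ n, Γ → UGp (k n)),
        (∀ g h' : Γ, ∃ N : ℕ, ∀ n ≥ N, ψ n (g * h') = ψ n g * ψ n h') ∧
        ∀ g : Γ, Tendsto (fun n => nTrace (k n) (ψ n g)) atTop (nhds (χ g)))
    {χ : Γ → ℂ} (hχ : IsCharacter χ) (B : Finset Γ) {ε : ℝ} (hε : 0 < ε) :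
    ∃ (K : ℕ) (u : Γ → UGp K),
      (∀ g ∈ B, ∀ h' ∈ B, u (g * h') = u g * u h') ∧
      ∀ g ∈ B, ‖nTrace K (u g) - χ g‖ < ε := by
  have hε3 : 0 < ε / 3 := by positivity
  -- Step 1: get a convex combination of extremal characters close to χ on B
  have hmem : χ ∈ closure (convexHull ℝ (Set.extremePoints ℝ (charSet Γ))) := by
    rw [charSet_eq_closure]; exact hχ
  set V : Set (Γ → ℂ) := ⋂ g ∈ B, (fun f : Γ → ℂ => f g) ⁻¹' Metric.ball (χ g) (ε/3) with hV
  have hVopen : IsOpen V :=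
    isOpen_biInter_finset fun g _ => Metric.isOpen_ball.preimage (continuous_apply g)
  have hVmem : χ ∈ V := by
    simp only [hV, Set.mem_iInter, Set.mem_preimage, Metric.mem_ball]
    intro g _
    simpa using hε3
  obtain ⟨y, hyV, hyhull⟩ := mem_closure_iff_nhds.mp hmem V (hVopen.mem_nhds hVmem)
  rw [convexHull_eq] at hyhull
  obtain ⟨ι, t, w, z, hw0, hw1, hz, hy⟩ := hyhull
  set r := t.card with hr
  set e : Fin r → ι := fun j => ((t.equivFin.symm j : {x // x ∈ t}) : ι) with he
  have he_mem : ∀ j, e j ∈ t := fun j => (t.equivFin.symm j).2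
  set tR : Fin r → ℝ := fun j => w (e j) with htRdef
  set χs : Fin r → (Γ → ℂ) := fun j => z (e j) with hχsdef
  have htR0 : ∀ j, 0 ≤ tR j := fun j => hw0 _ (he_mem j)
  have htR1 : ∑ j, tR j = 1 := by rw [← sum_reindex_r t w]; exact hw1
  have hchars : ∀ j, IsExtremalCharacter (χs j) :=
    fun j => extremal_of_mem_extremePoints (hz _ (he_mem j))
  have hcabs : ∀ j g, ‖χs j g‖ ≤ 1 :=
    fun j g => IsCharacter.abs_le_one (hchars j).1 g
  have hy_eval : ∀ g : Γ, y g = ∑ j, (tR j : ℂ) * χs j g := by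
    intro g
    rw [← hy, Finset.centerMass_eq_of_sum_1 _ _ hw1, Finset.sum_apply,
      sum_reindex_c t (fun i => (w i • z i) g)]
    apply Finset.sum_congr rfl
    intro j _
    simp [Pi.smul_apply, Complex.real_smul]
    rfl
  have hyB : ∀ g ∈ B, ‖y g - χ g‖ < ε / 3 := by
    intro g hg
    have := Set.mem_iInter.mp hyV g
    have := Set.mem_iInter.mp this hg
    simpa [Complex.dist_eq] using this
  -- Step 2: per-block approximations of the extremal characters
  have hex : ∀ j : Fin r, ∃ (K : ℕ) (u : Γ → UGp K), 0 < K ∧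
      (∀ g ∈ B, ∀ h' ∈ B, u (g * h') = u g * u h') ∧
      ∀ g ∈ B, ‖nTrace K (u g) - χs j g‖ < ε / 3 :=
    fun j => extremal_finite_approx (h _ (hchars j)) ((hchars j).1.2.2) B hε3
  choose K u hK0 hmult herr using hex
  -- Step 3: sizes
  have hKr : ∀ j, (0:ℝ) < K j := fun j => by exact_mod_cast hK0 j
  set S : ℕ := ∑ j, K j with hSdef
  obtain ⟨M, hM⟩ := exists_nat_gt (max 1 (3 * r * S / ε))
  have hM0 : (0:ℝ) < M := lt_of_lt_of_le (by norm_num) (le_of_lt ((le_max_left _ _).trans_lt hM))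
  set c : Fin r → ℕ := fun j => ⌊tR j * M / K j⌋₊ + 1 with hcdef
  set N := BlockAux.blockN K c with hNdef
  have hcK_low : ∀ j, tR j * M ≤ ((c j * K j : ℕ) : ℝ) := by
    intro j
    have h1 : tR j * M / K j < c j := by
      have := Nat.lt_floor_add_one (tR j * M / K j)
      push_cast [hcdef]
      exact_mod_cast this
    have h2 : tR j * M < (c j : ℝ) * K j := (div_lt_iff₀ (hKr j)).mp h1
    exact_mod_cast h2.le
  have hcK_high : ∀ j, ((c j * K j : ℕ) : ℝ) ≤ tR j * M + K j := by
    intro j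
    have h1 : (c j : ℝ) ≤ tR j * M / K j + 1 := by
      have := Nat.floor_le (div_nonneg (mul_nonneg (htR0 j) (Nat.cast_nonneg M))
        (Nat.cast_nonneg (K j)))
      push_cast [hcdef]
      linarith
    have h2 : (c j : ℝ) * K j ≤ (tR j * M / K j + 1) * K j :=
      mul_le_mul_of_nonneg_right h1 (hKr j).le
    rw [add_mul, div_mul_cancel₀ _ (hKr j).ne', one_mul] at h2
    exact_mod_cast h2
  have hNsum : (N:ℝ) = ∑ j, ((c j * K j : ℕ) : ℝ) := by
    rw [hNdef]
    unfold BlockAux.blockN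
    push_cast
    rfl
  have hNM : (M:ℝ) ≤ N := by
    rw [hNsum]
    calc (M:ℝ) = ∑ j, tR j * M := by rw [← Finset.sum_mul, htR1, one_mul]
    _ ≤ ∑ j, ((c j * K j : ℕ) : ℝ) := Finset.sum_le_sum fun j _ => hcK_low j
  have hNMS : (N:ℝ) ≤ M + S := by
    rw [hNsum]
    calc ∑ j, ((c j * K j : ℕ) : ℝ) ≤ ∑ j, (tR j * M + K j) :=
        Finset.sum_le_sum fun j _ => hcK_high j
    _ = M + S := by
        rw [Finset.sum_add_distrib, ← Finset.sum_mul, htR1, one_mul, hSdef]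
        push_cast
        ring
  have hN0 : (0:ℝ) < N := lt_of_lt_of_le hM0 hNM
  have hN0' : 0 < N := by exact_mod_cast hN0
  set wR : Fin r → ℝ := fun j => ((c j * K j : ℕ) : ℝ) / N with hwRdef
  have hwR0 : ∀ j, 0 ≤ wR j := fun j => by positivity
  have hwR_sum : ∑ j, wR j = 1 := by
    rw [hwRdef]
    rw [← Finset.sum_div, ← hNsum, div_self hN0.ne']
  have hKS : ∀ j, (K j : ℝ) ≤ S := by
    intro j
    have : K j ≤ S := Finset.single_le_sum (fun i _ => Nat.zero_le _) (Finset.mem_univ j)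
    exact_mod_cast this
  have htle1 : ∀ j, tR j ≤ 1 := by
    intro j
    rw [← htR1]
    exact Finset.single_le_sum (fun i _ => htR0 i) (Finset.mem_univ j)
  have hwdiff : ∀ j, |wR j - tR j| ≤ S / M := by
    intro j
    have hwn : wR j * N = ((c j * K j : ℕ) : ℝ) := div_mul_cancel₀ _ hN0.ne'
    have h1 : (wR j - tR j) * N ≤ S := by
      nlinarith [hcK_high j, hNM, htR0 j, hKS j]
    have h2 : (tR j - wR j) * N ≤ S := by
      nlinarith [hcK_low j, hNMS, htR0 j, htle1 j]
    have hSN : (S:ℝ) / N ≤ S / M :=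
      div_le_div_of_nonneg_left (by positivity) hM0 hNM
    rw [abs_le]
    constructor
    · have := (le_div_iff₀ hN0).mpr h2
      linarith [hSN]
    · have := (le_div_iff₀ hN0).mpr h1
      linarith [hSN]
  have hrSM : (r:ℝ) * S / M < ε / 3 := by
    have hM' : 3 * r * S / ε < M := (le_max_right _ _).trans_lt hM
    rw [div_lt_iff₀ hε] at hM'
    rw [div_lt_iff₀ hM0]
    nlinarith
  -- Step 4: the big unitary
  refine ⟨N, fun g => BlockAux.bigUnit K c (fun j => u j g), ?_, ?_⟩
  · intro g hg h' hh'
    show BlockAux.bigUnit K c (fun j => u j (g * h')) =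
      BlockAux.bigUnit K c (fun j => u j g) * BlockAux.bigUnit K c (fun j => u j h')
    have heq : (fun j => u j (g * h')) = fun j => u j g * u j h' := by
      funext j
      exact hmult j g hg h' hh'
    rw [heq]
    exact BlockAux.bigUnit_mul K c _ _
  · intro g hg
    have htrace : nTrace N (BlockAux.bigUnit K c (fun j => u j g)) =
        ∑ j, ((c j * K j : ℕ) : ℂ) / (N : ℂ) * nTrace (K j) (u j g) :=
      BlockAux.nTrace_bigUnit K c _ hK0
    have hwc : ∀ j, ((c j * K j : ℕ) : ℂ) / (N : ℂ) = ((wR j : ℝ) : ℂ) := by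
      intro j
      rw [hwRdef]
      push_cast
      ring
    have hdecomp : nTrace N (BlockAux.bigUnit K c (fun j => u j g)) - χ g =
        (∑ j, ((wR j : ℝ) : ℂ) * (nTrace (K j) (u j g) - χs j g))
        + (∑ j, (((wR j : ℝ) : ℂ) - ((tR j : ℝ) : ℂ)) * χs j g)
        + (y g - χ g) := by
      rw [htrace, hy_eval g]
      rw [Finset.sum_congr rfl (fun j _ => by rw [hwc j])]
      rw [← Finset.sum_add_distrib]
      rw [Finset.sum_congr rfl (fun j _ => by ring :
        ∀ j ∈ Finset.univ, ((wR j : ℝ) : ℂ) * (nTrace (K j) (u j g) - χs j g)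
          + ((((wR j : ℝ) : ℂ) - ((tR j : ℝ) : ℂ)) * χs j g)
          = ((wR j : ℝ) : ℂ) * nTrace (K j) (u j g) - ((tR j : ℝ) : ℂ) * χs j g)]
      rw [Finset.sum_sub_distrib]
      ring
    rw [hdecomp]
    have hb1 : ‖∑ j, ((wR j : ℝ) : ℂ) * (nTrace (K j) (u j g) - χs j g)‖
        ≤ ε / 3 := by
      calc ‖∑ j, ((wR j : ℝ) : ℂ) * (nTrace (K j) (u j g) - χs j g)‖
          ≤ ∑ j, ‖((wR j : ℝ) : ℂ) * (nTrace (K j) (u j g) - χs j g)‖ :=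
            norm_sum_le _ _
      _ ≤ ∑ j, wR j * (ε / 3) := by
          apply Finset.sum_le_sum
          intro j _
          rw [norm_mul, Complex.norm_real, Real.norm_eq_abs, abs_of_nonneg (hwR0 j)]
          exact mul_le_mul_of_nonneg_left (le_of_lt (herr j g hg)) (hwR0 j)
      _ = ε / 3 := by rw [← Finset.sum_mul, hwR_sum, one_mul]
    have hb2 : ‖∑ j, (((wR j : ℝ) : ℂ) - ((tR j : ℝ) : ℂ)) * χs j g‖
        < ε / 3 := by
      calc ‖∑ j, (((wR j : ℝ) : ℂ) - ((tR j : ℝ) : ℂ)) * χs j g‖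
          ≤ ∑ j, ‖(((wR j : ℝ) : ℂ) - ((tR j : ℝ) : ℂ)) * χs j g‖ :=
            norm_sum_le _ _
      _ ≤ ∑ j, (S : ℝ) / M := by
          apply Finset.sum_le_sum
          intro j _
          rw [norm_mul, ← Complex.ofReal_sub, Complex.norm_real, Real.norm_eq_abs]
          calc |wR j - tR j| * ‖χs j g‖ ≤ (S / M) * 1 :=
            mul_le_mul (hwdiff j) (hcabs j g) (norm_nonneg _) (by positivity)
          _ = S / M := mul_one _
      _ = (r : ℝ) * S / M := by
          rw [Finset.sum_const, Finset.card_univ, Fintype.card_fin, nsmul_eq_mul]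
          ring
      _ < ε / 3 := hrSM
    set A1 := ∑ j, ((wR j : ℝ) : ℂ) * (nTrace (K j) (u j g) - χs j g) with hA1
    set A2 := ∑ j, (((wR j : ℝ) : ℂ) - ((tR j : ℝ) : ℂ)) * χs j g with hA2
    calc ‖A1 + A2 + (y g - χ g)‖
        ≤ ‖A1 + A2‖ + ‖y g - χ g‖ := norm_add_le _ _
    _ ≤ ‖A1‖ + ‖A2‖ + ‖y g - χ g‖ := by
        have := norm_add_le A1 A2
        linarith
    _ < ε := by
        have := hyB g hg
        linarith

end CharAux

/-- If every extremal character of `Γ` is a pointwise limit of normalized traces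
along a partial homomorphism into unitary groups, then the same holds for every
character of `Γ`. -/
theorem character_criterion_of_extremal (Γ : Type*) [Group Γ] [Countable Γ]
    (h : ∀ χ : Γ → ℂ, IsExtremalCharacter χ →
      ∃ (k : ℕ → ℕ) (ψ : ∀ n, Γ → UGp (k n)), IsPartialHom ψ ∧
        ∀ g : Γ, Filter.Tendsto (fun n => nTrace (k n) (ψ n g)) Filter.atTop (nhds (χ g))) :
    ∀ χ : Γ → ℂ, IsCharacter χ →
      ∃ (k : ℕ → ℕ) (ψ : ∀ n, Γ → UGp (k n)), IsPartialHom ψ ∧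
        ∀ g : Γ, Filter.Tendsto (fun n => nTrace (k n) (ψ n g)) Filter.atTop (nhds (χ g)) := by
  intro χ hχ
  classical
  have : Nonempty Γ := ⟨1⟩
  obtain ⟨enum, henum⟩ := exists_surjective_nat Γ
  set B : ℕ → Finset Γ := fun m => (Finset.range (m+1)).image enum with hB
  have hBmem : ∀ i m, i ≤ m → enum i ∈ B m := fun i m him =>
    Finset.mem_image.mpr ⟨i, Finset.mem_range.mpr (by omega), rfl⟩
  have h' : ∀ χ' : Γ → ℂ, IsExtremalCharacter χ' →
      ∃ (k : ℕ → ℕ) (ψ : ∀ n, Γ → UGp (k n)),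
        (∀ g h' : Γ, ∃ N : ℕ, ∀ n ≥ N, ψ n (g * h') = ψ n g * ψ n h') ∧
        ∀ g : Γ, Filter.Tendsto (fun n => nTrace (k n) (ψ n g)) Filter.atTop (nhds (χ' g)) := by
    intro χ' hχ'
    obtain ⟨k, ψ, hph, htr⟩ := h χ' hχ'
    exact ⟨k, ψ, hph, htr⟩
  have happrox : ∀ m : ℕ, ∃ (K : ℕ) (u : Γ → UGp K),
      (∀ g ∈ B m, ∀ h' ∈ B m, u (g * h') = u g * u h') ∧
      ∀ g ∈ B m, ‖nTrace K (u g) - χ g‖ < 1/(m+1) := by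
    intro m
    exact CharAux.char_finite_approx h' hχ (B m) (by positivity)
  choose K u hmult htr using happrox
  refine ⟨K, fun m => u m, ?_, ?_⟩
  · intro g h''
    obtain ⟨i, hi⟩ := henum g
    obtain ⟨j, hj⟩ := henum h''
    refine ⟨max i j, fun m hm => ?_⟩
    have hgB : g ∈ B m := hi ▸ hBmem i m (le_trans (le_max_left _ _) hm)
    have hhB : h'' ∈ B m := hj ▸ hBmem j m (le_trans (le_max_right _ _) hm)
    exact hmult m g hgB h'' hhB
  · intro g
    obtain ⟨i, hi⟩ := henum g
    rw [Metric.tendsto_atTop]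
    intro ε hε
    obtain ⟨n1, hn1⟩ := exists_nat_gt (1/ε)
    refine ⟨max i n1, fun m hm => ?_⟩
    have hgB : g ∈ B m := hi ▸ hBmem i m (le_trans (le_max_left _ _) hm)
    have h1 : ‖nTrace (K m) (u m g) - χ g‖ < 1/(m+1) := htr m g hgB
    have hmn : (n1:ℝ) + 1 ≤ (m:ℝ) + 1 := by
      have : n1 ≤ m := le_trans (le_max_right _ _) hm
      exact_mod_cast by omega
    have h2 : (1:ℝ)/(m+1) ≤ 1/(n1+1) :=
      one_div_le_one_div_of_le (by positivity) hmn
    have h3 : (1:ℝ)/(n1+1) < ε := by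
      have hn1' : 1 < (n1:ℝ) * ε := by
        have := (div_lt_iff₀ hε).mp hn1
        linarith
      rw [div_lt_iff₀ (by positivity : (0:ℝ) < (n1:ℝ)+1)]
      nlinarith
    rw [Complex.dist_eq]
    linarith


end
end

section
/- Let (k_n) be a strictly increasing sequence of positive integers and let Γ be a countable group. If Γ is MAP, then there exists a sequence of genuine homomorphisms φ_n : Γ → U(k_n) that forms a hyperlinear approximation of Γ. If Γ is LEF, then there exists a partial homomorphism φ_n : Γ → U(k_n) that forms a hyperlinear approximation of Γ. -/
open Filter Matrix
open scoped ComplexOrder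

noncomputable section

open scoped Kronecker

namespace HLA

variable {a b d e : ℕ}

/-- reindex a square matrix along an equiv -/
def reE {m n : Type*} (eq : m ≃ n) (A : Matrix m m ℂ) : Matrix n n ℂ :=
  A.submatrix eq.symm eq.symm

lemma reE_mul {m n : Type*} [Fintype m] [Fintype n] (eq : m ≃ n) (A B : Matrix m m ℂ) :
    reE eq A * reE eq B = reE eq (A * B) := by
  simp [reE, Matrix.submatrix_mul_equiv]

lemma reE_one {m n : Type*} [DecidableEq m] [DecidableEq n] (eq : m ≃ n) :
    reE eq (1 : Matrix m m ℂ) = 1 := by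
  simp [reE, Matrix.submatrix_one_equiv]

lemma reE_star {m n : Type*} (eq : m ≃ n) (A : Matrix m m ℂ) :
    star (reE eq A) = reE eq (star A) := by
  simp [reE, Matrix.star_eq_conjTranspose, Matrix.conjTranspose_submatrix]

lemma trace_reE {m n : Type*} [Fintype m] [Fintype n] (eq : m ≃ n) (A : Matrix m m ℂ) :
    trace (reE eq A) = trace A := by
  simp [reE, Matrix.trace, Matrix.diag, Equiv.sum_comp eq.symm (fun i => A i i)]

/-- direct sum of two square matrices -/
def dsum (A : Matrix (Fin a) (Fin a) ℂ) (B : Matrix (Fin b) (Fin b) ℂ) :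
    Matrix (Fin (a + b)) (Fin (a + b)) ℂ :=
  reE finSumFinEquiv (fromBlocks A 0 0 B)

lemma dsum_mul (A A' : Matrix (Fin a) (Fin a) ℂ) (B B' : Matrix (Fin b) (Fin b) ℂ) :
    dsum A B * dsum A' B' = dsum (A * A') (B * B') := by
  rw [dsum, dsum, reE_mul, Matrix.fromBlocks_multiply]
  simp [dsum]

lemma dsum_one : dsum (1 : Matrix (Fin a) (Fin a) ℂ) (1 : Matrix (Fin b) (Fin b) ℂ) = 1 := by
  rw [dsum, Matrix.fromBlocks_one, reE_one]

lemma dsum_star (A : Matrix (Fin a) (Fin a) ℂ) (B : Matrix (Fin b) (Fin b) ℂ) :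
    star (dsum A B) = dsum (star A) (star B) := by
  rw [dsum, reE_star, dsum]
  congr 1
  simp [Matrix.star_eq_conjTranspose, Matrix.fromBlocks_conjTranspose]

lemma trace_dsum (A : Matrix (Fin a) (Fin a) ℂ) (B : Matrix (Fin b) (Fin b) ℂ) :
    trace (dsum A B) = trace A + trace B := by
  rw [dsum, trace_reE]
  simp [Matrix.trace, Matrix.diag, Fintype.sum_sum_type, fromBlocks]

lemma dsum_apply_inl (A : Matrix (Fin a) (Fin a) ℂ) (B : Matrix (Fin b) (Fin b) ℂ)
    (i j : Fin a) :
    dsum A B (finSumFinEquiv (Sum.inl i)) (finSumFinEquiv (Sum.inl j)) = A i j := by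
  simp [dsum, reE, fromBlocks]

lemma dsum_apply_inr (A : Matrix (Fin a) (Fin a) ℂ) (B : Matrix (Fin b) (Fin b) ℂ)
    (i j : Fin b) :
    dsum A B (finSumFinEquiv (Sum.inr i)) (finSumFinEquiv (Sum.inr j)) = B i j := by
  simp [dsum, reE, fromBlocks]

/-- q-fold block-diagonal repetition -/
def rept (q : ℕ) (A : Matrix (Fin d) (Fin d) ℂ) : Matrix (Fin (d * q)) (Fin (d * q)) ℂ :=
  reE finProdFinEquiv (blockDiagonal fun _ : Fin q => A)

lemma rept_mul (q : ℕ) (A B : Matrix (Fin d) (Fin d) ℂ) :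
    rept q A * rept q B = rept q (A * B) := by
  rw [rept, rept, reE_mul, ← Matrix.blockDiagonal_mul]; rfl

lemma rept_one (q : ℕ) : rept q (1 : Matrix (Fin d) (Fin d) ℂ) = 1 := by
  have h : (fun _ : Fin q => (1 : Matrix (Fin d) (Fin d) ℂ)) = 1 := rfl
  rw [rept, h, Matrix.blockDiagonal_one, reE_one]

lemma rept_star (q : ℕ) (A : Matrix (Fin d) (Fin d) ℂ) :
    star (rept q A) = rept q (star A) := by
  rw [rept, reE_star, rept]
  congr 1
  simp [Matrix.star_eq_conjTranspose, Matrix.blockDiagonal_conjTranspose]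

lemma trace_rept (q : ℕ) (A : Matrix (Fin d) (Fin d) ℂ) :
    trace (rept q A) = q * trace A := by
  rw [rept, trace_reE, Matrix.trace_blockDiagonal]
  simp

/-- Kronecker product reindexed to `Fin (d * e)` -/
def tmul (A : Matrix (Fin d) (Fin d) ℂ) (B : Matrix (Fin e) (Fin e) ℂ) :
    Matrix (Fin (d * e)) (Fin (d * e)) ℂ :=
  reE finProdFinEquiv (A ⊗ₖ B)

lemma tmul_mul (A A' : Matrix (Fin d) (Fin d) ℂ) (B B' : Matrix (Fin e) (Fin e) ℂ) :
    tmul A B * tmul A' B' = tmul (A * A') (B * B') := by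
  rw [tmul, tmul, reE_mul, ← Matrix.mul_kronecker_mul]; rfl

lemma tmul_one : tmul (1 : Matrix (Fin d) (Fin d) ℂ) (1 : Matrix (Fin e) (Fin e) ℂ) = 1 := by
  rw [tmul, Matrix.one_kronecker_one, reE_one]

lemma tmul_star (A : Matrix (Fin d) (Fin d) ℂ) (B : Matrix (Fin e) (Fin e) ℂ) :
    star (tmul A B) = tmul (star A) (star B) := by
  ext i j
  simp [tmul, reE, Matrix.star_eq_conjTranspose, Matrix.submatrix_apply,
    Matrix.conjTranspose_apply, kroneckerMap, _root_.map_mul, mul_comm]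

lemma trace_tmul (A : Matrix (Fin d) (Fin d) ℂ) (B : Matrix (Fin e) (Fin e) ℂ) :
    trace (tmul A B) = trace A * trace B := by
  rw [tmul, trace_reE, Matrix.trace_kronecker]


/-- cast a square matrix along an equality of dimensions -/
def castM (h : a = b) (A : Matrix (Fin a) (Fin a) ℂ) : Matrix (Fin b) (Fin b) ℂ :=
  reE (finCongr h) A

lemma castM_mul (h : a = b) (A B : Matrix (Fin a) (Fin a) ℂ) :
    castM h A * castM h B = castM h (A * B) := reE_mul _ _ _

lemma castM_one (h : a = b) : castM h (1 : Matrix (Fin a) (Fin a) ℂ) = 1 := reE_one _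

lemma castM_star (h : a = b) (A : Matrix (Fin a) (Fin a) ℂ) :
    star (castM h A) = castM h (star A) := reE_star _ _

lemma trace_castM (h : a = b) (A : Matrix (Fin a) (Fin a) ℂ) :
    trace (castM h A) = trace A := trace_reE _ _

/-- embed a `d × d` matrix into `k × k` as `⌊k/d⌋` diagonal copies padded by the identity -/
def matEmbed (d k : ℕ) (A : Matrix (Fin d) (Fin d) ℂ) : Matrix (Fin k) (Fin k) ℂ :=
  castM (Nat.div_add_mod k d) (dsum (rept (k / d) A) (1 : Matrix (Fin (k % d)) (Fin (k % d)) ℂ))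

lemma matEmbed_mul (d k : ℕ) (A B : Matrix (Fin d) (Fin d) ℂ) :
    matEmbed d k A * matEmbed d k B = matEmbed d k (A * B) := by
  rw [matEmbed, matEmbed, castM_mul, dsum_mul, rept_mul, one_mul, matEmbed]

lemma matEmbed_one (d k : ℕ) : matEmbed d k (1 : Matrix (Fin d) (Fin d) ℂ) = 1 := by
  rw [matEmbed, rept_one, dsum_one, castM_one]

lemma matEmbed_star (d k : ℕ) (A : Matrix (Fin d) (Fin d) ℂ) :
    star (matEmbed d k A) = matEmbed d k (star A) := by
  rw [matEmbed, castM_star, dsum_star, rept_star, star_one, matEmbed]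

lemma trace_matEmbed (d k : ℕ) (A : Matrix (Fin d) (Fin d) ℂ) :
    trace (matEmbed d k A) = (k / d : ℕ) * trace A + (k % d : ℕ) := by
  rw [matEmbed, trace_castM, trace_dsum, trace_rept, Matrix.trace_one]
  simp

/-- `A ⊕ Ā ⊕ 1` -/
def symM (A : Matrix (Fin d) (Fin d) ℂ) : Matrix (Fin (d + (d + 1))) (Fin (d + (d + 1))) ℂ :=
  dsum A (dsum (A.map (starRingEnd ℂ)) (1 : Matrix (Fin 1) (Fin 1) ℂ))

lemma conjM_mul (A B : Matrix (Fin d) (Fin d) ℂ) :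
    (A * B).map (starRingEnd ℂ) = A.map (starRingEnd ℂ) * B.map (starRingEnd ℂ) := by
  ext i j
  simp [Matrix.mul_apply, _root_.map_sum, _root_.map_mul]

lemma conjM_one : (1 : Matrix (Fin d) (Fin d) ℂ).map (starRingEnd ℂ) = 1 := by
  ext i j
  simp [Matrix.one_apply, apply_ite]

lemma conjM_star (A : Matrix (Fin d) (Fin d) ℂ) :
    star (A.map (starRingEnd ℂ)) = (star A).map (starRingEnd ℂ) := by
  ext i j
  simp [Matrix.star_eq_conjTranspose, Matrix.conjTranspose_apply]

lemma symM_mul (A B : Matrix (Fin d) (Fin d) ℂ) :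
    symM A * symM B = symM (A * B) := by
  rw [symM, symM, dsum_mul, dsum_mul, one_mul, ← conjM_mul, symM]

lemma symM_one : symM (1 : Matrix (Fin d) (Fin d) ℂ) = 1 := by
  rw [symM, conjM_one, dsum_one, dsum_one]

lemma symM_star (A : Matrix (Fin d) (Fin d) ℂ) :
    star (symM A) = symM (star A) := by
  rw [symM, dsum_star, dsum_star, star_one, conjM_star, symM]

lemma trace_conjM (A : Matrix (Fin d) (Fin d) ℂ) :
    trace (A.map (starRingEnd ℂ)) = (starRingEnd ℂ) (trace A) := by
  simp [Matrix.trace, Matrix.diag, _root_.map_sum]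

lemma trace_symM (A : Matrix (Fin d) (Fin d) ℂ) :
    trace (symM A) = ((2 * (trace A).re + 1 : ℝ) : ℂ) := by
  rw [symM, trace_dsum, trace_dsum, trace_conjM, Matrix.trace_one]
  rw [← add_assoc, Complex.add_conj (trace A)]
  simp


lemma col_normSq {k : ℕ} {A : Matrix (Fin k) (Fin k) ℂ}
    (hA : A ∈ Matrix.unitaryGroup (Fin k) ℂ) (j : Fin k) :
    ∑ i, Complex.normSq (A i j) = 1 := by
  have h := Matrix.mem_unitaryGroup_iff'.mp hA
  have h2 := congrArg (fun M => M j j) h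
  simp only [Matrix.mul_apply, Matrix.star_apply, Matrix.star_eq_conjTranspose,
    Matrix.conjTranspose_apply, Matrix.one_apply_eq] at h2
  simp only [Complex.star_def] at h2
  have h3 : ∑ i, ((Complex.normSq (A i j) : ℝ) : ℂ) = 1 := by
    rw [← h2]
    refine Finset.sum_congr rfl fun i _ => ?_
    rw [← Complex.normSq_eq_conj_mul_self]
  have h4 := congrArg Complex.re h3
  simpa using h4

lemma entry_abs_le {k : ℕ} {A : Matrix (Fin k) (Fin k) ℂ}
    (hA : A ∈ Matrix.unitaryGroup (Fin k) ℂ) (i j : Fin k) :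
    norm (A i j) ≤ 1 := by
  have h := col_normSq hA j
  have h1 : Complex.normSq (A i j) ≤ 1 := by
    rw [← h]
    exact Finset.single_le_sum (f := fun l => Complex.normSq (A l j))
      (fun l _ => Complex.normSq_nonneg _) (Finset.mem_univ i)
  rw [Complex.norm_def]
  calc Real.sqrt (Complex.normSq (A i j)) ≤ Real.sqrt 1 := Real.sqrt_le_sqrt h1
  _ = 1 := Real.sqrt_one

lemma abs_trace_le {k : ℕ} {A : Matrix (Fin k) (Fin k) ℂ}
    (hA : A ∈ Matrix.unitaryGroup (Fin k) ℂ) :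
    norm (trace A) ≤ k := by
  calc norm (trace A) ≤ ∑ i, norm (A i i) :=
        norm_sum_le _ _
  _ ≤ ∑ _i : Fin k, (1 : ℝ) := Finset.sum_le_sum fun i _ => entry_abs_le hA i i
  _ = k := by simp

lemma eq_one_of_re_eq_one {z : ℂ} (h1 : z.re = 1) (h2 : norm z ≤ 1) : z = 1 := by
  have hsq : Complex.normSq z ≤ 1 := by
    have := Complex.sq_norm z
    nlinarith [norm_nonneg z]
  have him : z.im = 0 := by
    have : Complex.normSq z = 1 + z.im * z.im := by
      rw [Complex.normSq_apply, h1]; ring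
    nlinarith [mul_self_nonneg z.im]
  exact Complex.ext (by simp [h1]) (by simp [him])

/-- a unitary matrix whose trace has real part `≥ k` is the identity -/
lemma eq_one_of_re_trace {k : ℕ} {A : Matrix (Fin k) (Fin k) ℂ}
    (hA : A ∈ Matrix.unitaryGroup (Fin k) ℂ) (h : (k : ℝ) ≤ (trace A).re) :
    A = 1 := by
  have hre : ∀ i, (A i i).re ≤ 1 := fun i =>
    le_trans (Complex.re_le_norm _) (entry_abs_le hA i i)
  have hdiag : ∀ i, A i i = 1 := by
    intro i
    by_contra hne
    have hlt : (A i i).re < 1 := by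
      rcases lt_or_eq_of_le (hre i) with h' | h'
      · exact h'
      · exact absurd (eq_one_of_re_eq_one h' (entry_abs_le hA i i)) hne
    have : ∑ l, (A l l).re < ∑ _l : Fin k, (1 : ℝ) :=
      Finset.sum_lt_sum (fun l _ => hre l) ⟨i, Finset.mem_univ i, hlt⟩
    rw [Finset.sum_const, Finset.card_univ, Fintype.card_fin, nsmul_eq_mul, mul_one] at this
    have htr : (trace A).re = ∑ l, (A l l).re := by
      simp [Matrix.trace, Matrix.diag, Complex.re_sum]
    linarith [h]
  -- off-diagonal entries vanish
  ext i j
  rcases eq_or_ne i j with rfl | hij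
  · simp [hdiag i, Matrix.one_apply_eq]
  · have hcol := col_normSq hA j
    have hjj : Complex.normSq (A j j) = 1 := by rw [hdiag j]; simp
    have hsum0 : ∑ l ∈ Finset.univ.erase j, Complex.normSq (A l j) = 0 := by
      have h5 : Complex.normSq (A j j) + ∑ l ∈ Finset.univ.erase j, Complex.normSq (A l j)
          = 1 := by
        rw [Finset.add_sum_erase _ (fun l => Complex.normSq (A l j)) (Finset.mem_univ j)]
        exact hcol
      linarith
    have hz : Complex.normSq (A i j) = 0 := by
      have hnn : ∀ l ∈ Finset.univ.erase j, 0 ≤ Complex.normSq (A l j) :=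
        fun l _ => Complex.normSq_nonneg _
      have := (Finset.sum_eq_zero_iff_of_nonneg hnn).mp hsum0 i
        (Finset.mem_erase.mpr ⟨hij, Finset.mem_univ i⟩)
      exact this
    have : A i j = 0 := by
      rwa [Complex.normSq_eq_zero] at hz
    simp [this, Matrix.one_apply_ne hij]


/-- a unitary-matrix-valued map with `f 1 = 1` -/
structure MRep (Γ : Type*) [Group Γ] where
  d : ℕ
  pos : 0 < d
  f : Γ → Matrix (Fin d) (Fin d) ℂ
  one : f 1 = 1
  uni : ∀ g, f g ∈ Matrix.unitaryGroup (Fin d) ℂ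

variable {Γ : Type*} [Group Γ]

/-- multiplicativity at a pair -/
def MulAt (r : MRep Γ) (g h : Γ) : Prop := r.f (g * h) = r.f g * r.f h

def trivRep : MRep Γ where
  d := 1
  pos := one_pos
  f := fun _ => 1
  one := rfl
  uni := fun _ => Submonoid.one_mem _

lemma trivRep_mulAt (g h : Γ) : MulAt (trivRep : MRep Γ) g h := by
  simp [MulAt, trivRep]; exact (mul_one _).symm

lemma star_mul_self_of_mem {k : ℕ} {A : Matrix (Fin k) (Fin k) ℂ}
    (h : A ∈ Matrix.unitaryGroup (Fin k) ℂ) : star A * A = 1 :=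
  Matrix.mem_unitaryGroup_iff'.mp h

def tensorRep (r s : MRep Γ) : MRep Γ where
  d := r.d * s.d
  pos := Nat.mul_pos r.pos s.pos
  f := fun g => tmul (r.f g) (s.f g)
  one := by show tmul (r.f 1) (s.f 1) = 1; rw [r.one, s.one, tmul_one]
  uni := fun g => by
    rw [Matrix.mem_unitaryGroup_iff']
    rw [tmul_star, tmul_mul, star_mul_self_of_mem (r.uni g), star_mul_self_of_mem (s.uni g),
      tmul_one]

lemma tensorRep_mulAt {r s : MRep Γ} {g h : Γ} (hr : MulAt r g h) (hs : MulAt s g h) :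
    MulAt (tensorRep r s) g h := by
  simp only [MulAt, tensorRep] at *
  rw [hr, hs]; exact (tmul_mul _ _ _ _).symm

def symRep (r : MRep Γ) : MRep Γ where
  d := r.d + (r.d + 1)
  pos := by omega
  f := fun g => symM (r.f g)
  one := by show symM (r.f 1) = 1; rw [r.one, symM_one]
  uni := fun g => by
    rw [Matrix.mem_unitaryGroup_iff', symM_star, symM_mul,
      star_mul_self_of_mem (r.uni g), symM_one]

lemma symRep_mulAt {r : MRep Γ} {g h : Γ} (hr : MulAt r g h) :
    MulAt (symRep r) g h := by
  simp only [MulAt, symRep] at *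
  rw [hr]; exact (symM_mul _ _).symm

def embedRep (k : ℕ) (hk : 0 < k) (r : MRep Γ) : MRep Γ where
  d := k
  pos := hk
  f := fun g => matEmbed r.d k (r.f g)
  one := by show matEmbed r.d k (r.f 1) = 1; rw [r.one, matEmbed_one]
  uni := fun g => by
    rw [Matrix.mem_unitaryGroup_iff', matEmbed_star, matEmbed_mul,
      star_mul_self_of_mem (r.uni g), matEmbed_one]

lemma embedRep_mulAt {k : ℕ} {hk : 0 < k} {r : MRep Γ} {g h : Γ} (hr : MulAt r g h) :
    MulAt (embedRep k hk r) g h := by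
  simp only [MulAt, embedRep] at *
  rw [hr]; exact (matEmbed_mul _ _ _ _).symm

noncomputable def listTensor : List (MRep Γ) → MRep Γ
  | [] => trivRep
  | r :: l => tensorRep r (listTensor l)

lemma listTensor_mulAt {l : List (MRep Γ)} {g h : Γ}
    (hl : ∀ r ∈ l, MulAt r g h) : MulAt (listTensor l) g h := by
  induction l with
  | nil => exact trivRep_mulAt g h
  | cons r l ih =>
      exact tensorRep_mulAt (hl r (List.mem_cons_self))
        (ih fun s hs => hl s (List.mem_cons_of_mem r hs))

/-- normalized absolute trace -/
noncomputable def ntr (r : MRep Γ) (g : Γ) : ℝ := norm (trace (r.f g)) / r.d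

lemma ntr_nonneg (r : MRep Γ) (g : Γ) : 0 ≤ ntr r g :=
  div_nonneg (norm_nonneg _) (Nat.cast_nonneg _)

lemma ntr_le_one (r : MRep Γ) (g : Γ) : ntr r g ≤ 1 := by
  rw [ntr, div_le_one (by exact_mod_cast r.pos)]
  exact abs_trace_le (r.uni g)

lemma ntr_tensor (r s : MRep Γ) (g : Γ) :
    ntr (tensorRep r s) g = ntr r g * ntr s g := by
  show ‖trace (tmul (r.f g) (s.f g))‖ / ((r.d * s.d : ℕ) : ℝ) = ‖trace (r.f g)‖ / r.d * (‖trace (s.f g)‖ / s.d)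
  rw [trace_tmul, norm_mul, Nat.cast_mul]
  rw [mul_div_mul_comm]

lemma ntr_trivRep (g : Γ) : ntr (trivRep : MRep Γ) g = 1 := by
  show ‖trace (1 : Matrix (Fin 1) (Fin 1) ℂ)‖ / ((1 : ℕ) : ℝ) = 1
  simp

lemma ntr_listTensor (l : List (MRep Γ)) (g : Γ) :
    ntr (listTensor l) g = (l.map fun r => ntr r g).prod := by
  induction l with
  | nil => simp [listTensor, ntr_trivRep]
  | cons r l ih => simp [listTensor, ntr_tensor, ih]

/-- if `r` is actually nontrivial at `g`, the symmetrized rep has `ntr < 1` -/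
lemma ntr_symRep_lt_one {r : MRep Γ} {g : Γ} (hg : r.f g ≠ 1) :
    ntr (symRep r) g < 1 := by
  have hret : (trace (r.f g)).re < r.d := by
    by_contra hle
    push_neg at hle
    exact hg (eq_one_of_re_trace (r.uni g) hle)
  have habs : norm (trace (r.f g)) ≤ r.d := abs_trace_le (r.uni g)
  have hrelb : -(r.d : ℝ) ≤ (trace (r.f g)).re := by
    have := Complex.abs_re_le_norm (trace (r.f g))
    rw [abs_le] at this
    linarith [this.1]
  have htr : norm (trace ((symRep r).f g)) = |2 * (trace (r.f g)).re + 1| := by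
    show norm (trace (symM (r.f g))) = _
    rw [trace_symM, Complex.norm_real, Real.norm_eq_abs]
  have hpos : (0 : ℝ) < ((symRep r).d : ℝ) := by exact_mod_cast (symRep r).pos
  rw [ntr, htr, div_lt_one hpos]
  show |2 * (trace (r.f g)).re + 1| < ((r.d + (r.d + 1) : ℕ) : ℝ)
  rw [abs_lt]
  push_cast
  constructor <;> nlinarith


section RegRep

variable {F : Type*} [Group F] [Fintype F] [DecidableEq F]

/-- left-regular-representation permutation matrix -/
noncomputable def permMat (x : F) :
    Matrix (Fin (Fintype.card F)) (Fin (Fintype.card F)) ℂ :=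
  fun i j => if (Fintype.equivFin F).symm i = x * (Fintype.equivFin F).symm j then 1 else 0

lemma permMat_one : permMat (1 : F) = 1 := by
  ext i j
  by_cases h : i = j <;>
    simp [permMat, Matrix.one_apply, h, (Fintype.equivFin F).symm.injective.eq_iff]

lemma permMat_mul (x y : F) : permMat (x * y) = permMat x * permMat y := by
  ext i j
  rw [Matrix.mul_apply,
    ← Equiv.sum_comp (Fintype.equivFin F) (fun l => permMat x i l * permMat y l j)]
  simp only [permMat, Equiv.symm_apply_apply]
  rw [Finset.sum_eq_single (y * (Fintype.equivFin F).symm j)]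
  · simp [mul_assoc]
  · intro m _ hm; simp [hm]
  · intro h; exact absurd (Finset.mem_univ _) h

lemma permMat_star (x : F) : star (permMat x) = permMat x⁻¹ := by
  ext i j
  simp only [Matrix.star_eq_conjTranspose, Matrix.conjTranspose_apply, permMat]
  by_cases h : (Fintype.equivFin F).symm i = x⁻¹ * (Fintype.equivFin F).symm j
  · have h' : (Fintype.equivFin F).symm j = x * (Fintype.equivFin F).symm i := by
      rw [h]; group
    rw [if_pos h', if_pos h]; simp
  · have h' : ¬((Fintype.equivFin F).symm j = x * (Fintype.equivFin F).symm i) := by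
      intro hc; apply h; rw [hc]; group
    rw [if_neg h', if_neg h]; simp

lemma permMat_unitary (x : F) :
    permMat x ∈ Matrix.unitaryGroup (Fin (Fintype.card F)) ℂ := by
  rw [Matrix.mem_unitaryGroup_iff', permMat_star, ← permMat_mul, inv_mul_cancel, permMat_one]

lemma trace_permMat {x : F} (hx : x ≠ 1) : trace (permMat x) = 0 := by
  rw [Matrix.trace]
  refine Finset.sum_eq_zero fun i _ => ?_
  have : ¬ ((Fintype.equivFin F).symm i = x * (Fintype.equivFin F).symm i) := by
    intro h
    apply hx
    have h2 : x * ((Fintype.equivFin F).symm i) = 1 * ((Fintype.equivFin F).symm i) := by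
      rw [one_mul, ← h]
    exact mul_right_cancel h2
  simp [Matrix.diag, permMat, this]

/-- the regular representation composed with a map `Γ → F` sending `1` to `1` -/
noncomputable def regRep {Γ : Type*} [Group Γ] (φ : Γ → F) (hφ : φ 1 = 1) : MRep Γ where
  d := Fintype.card F
  pos := Fintype.card_pos
  f := fun g => permMat (φ g)
  one := by show permMat (φ 1) = 1; rw [hφ, permMat_one]
  uni := fun g => permMat_unitary _

end RegRep


open Filter


lemma hsDist_self (k : ℕ) (A : Matrix (Fin k) (Fin k) ℂ) : hsDist k A A = 0 := by
  simp [hsDist]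

lemma hsDist_one {k : ℕ} (hk : 0 < k) {A : Matrix (Fin k) (Fin k) ℂ}
    (hA : A ∈ Matrix.unitaryGroup (Fin k) ℂ) :
    hsDist k A 1 = Real.sqrt (2 - 2 * ((trace A).re / k)) := by
  have hexp : (A - 1)ᴴ * (A - 1) = 1 - Aᴴ - A + 1 := by
    have h1 : Aᴴ * A = 1 := by
      have := star_mul_self_of_mem hA
      rwa [Matrix.star_eq_conjTranspose] at this
    rw [Matrix.conjTranspose_sub, Matrix.conjTranspose_one, sub_mul, mul_sub, mul_sub,
      h1, mul_one, one_mul, mul_one]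
    abel
  rw [hsDist, hexp]
  have htr : (trace ((1 : Matrix (Fin k) (Fin k) ℂ) - Aᴴ - A + 1)).re
      = 2 * k - 2 * (trace A).re := by
    rw [Matrix.trace_add, Matrix.trace_sub, Matrix.trace_sub, Matrix.trace_one,
      Matrix.trace_conjTranspose]
    simp [Complex.sub_re, Complex.add_re]
    ring
  rw [htr]
  congr 1
  field_simp

lemma tendsto_hsDist_one {k : ℕ → ℕ} (hkpos : ∀ n, 0 < k n)
    (ψ : ∀ n, Matrix (Fin (k n)) (Fin (k n)) ℂ)
    (hmem : ∀ n, ψ n ∈ Matrix.unitaryGroup (Fin (k n)) ℂ)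
    (h : Tendsto (fun n => norm (trace (ψ n)) / k n) atTop (nhds 0)) :
    Tendsto (fun n => hsDist (k n) (ψ n) 1) atTop (nhds (Real.sqrt 2)) := by
  have hre : Tendsto (fun n => (trace (ψ n)).re / k n) atTop (nhds 0) := by
    apply squeeze_zero_norm _ h
    intro n
    rw [Real.norm_eq_abs, abs_div, Nat.abs_cast]
    gcongr
    exact Complex.abs_re_le_norm _
  have hcont : Tendsto (fun x : ℝ => Real.sqrt (2 - 2 * x)) (nhds 0) (nhds (Real.sqrt 2)) := by
    have : Tendsto (fun x : ℝ => 2 - 2 * x) (nhds 0) (nhds 2) := by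
      have hc : Continuous (fun x : ℝ => 2 - 2 * x) := by continuity
      have := hc.tendsto (0 : ℝ)
      simpa using this
    exact (Real.continuous_sqrt.tendsto 2).comp this
  have := hcont.comp hre
  apply this.congr
  intro n
  simp only [Function.comp]
  rw [hsDist_one (hkpos n) (hmem n)]


lemma list_prod_le_one {l : List ℝ} (h0 : ∀ x ∈ l, 0 ≤ x) (h1 : ∀ x ∈ l, x ≤ 1) :
    l.prod ≤ 1 := by
  induction l with
  | nil => simp
  | cons x l ih =>
      rw [List.prod_cons]
      have hx0 : 0 ≤ x := h0 x (List.mem_cons_self)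
      have hx1 : x ≤ 1 := h1 x (List.mem_cons_self)
      have hl0 : 0 ≤ l.prod := List.prod_nonneg fun y hy => h0 y (List.mem_cons_of_mem x hy)
      have hl1 : l.prod ≤ 1 := ih (fun y hy => h0 y (List.mem_cons_of_mem x hy))
        (fun y hy => h1 y (List.mem_cons_of_mem x hy))
      nlinarith

lemma list_prod_le_of_mem {l : List ℝ} (h0 : ∀ x ∈ l, 0 ≤ x) (h1 : ∀ x ∈ l, x ≤ 1)
    {c : ℝ} (hc : c ∈ l) : l.prod ≤ c := by
  induction l with
  | nil => simp at hc
  | cons x l ih =>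
      have hx0 : 0 ≤ x := h0 x (List.mem_cons_self)
      have hx1 : x ≤ 1 := h1 x (List.mem_cons_self)
      have hl0 : 0 ≤ l.prod := List.prod_nonneg fun y hy => h0 y (List.mem_cons_of_mem x hy)
      have hl1 : l.prod ≤ 1 := list_prod_le_one
        (fun y hy => h0 y (List.mem_cons_of_mem x hy))
        (fun y hy => h1 y (List.mem_cons_of_mem x hy))
      rw [List.prod_cons]
      rcases List.mem_cons.mp hc with rfl | hcl
      · calc c * l.prod ≤ c * 1 := by nlinarith
        _ = c := mul_one c
      · have := ih (fun y hy => h0 y (List.mem_cons_of_mem x hy))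
          (fun y hy => h1 y (List.mem_cons_of_mem x hy)) hcl
        nlinarith

section Sel

variable (D k : ℕ → ℕ)

noncomputable def sel (n : ℕ) : ℕ :=
  ((Finset.range (n + 1)).filter fun m => m * D m ≤ k n).max'
    ⟨0, Finset.mem_filter.mpr ⟨Finset.mem_range.mpr (Nat.succ_pos n), by simp⟩⟩

lemma sel_mem (n : ℕ) :
    sel D k n ∈ (Finset.range (n + 1)).filter fun m => m * D m ≤ k n :=
  Finset.max'_mem _ _

lemma sel_spec (n : ℕ) : sel D k n * D (sel D k n) ≤ k n :=
  (Finset.mem_filter.mp (sel_mem D k n)).2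

lemma le_sel {m n : ℕ} (hmn : m ≤ n) (h : m * D m ≤ k n) : m ≤ sel D k n :=
  Finset.le_max' ((Finset.range (n + 1)).filter fun m => m * D m ≤ k n) m
    (Finset.mem_filter.mpr ⟨Finset.mem_range.mpr (Nat.lt_succ_of_le hmn), h⟩)

lemma tendsto_sel (hk : StrictMono k) : Tendsto (sel D k) atTop atTop := by
  rw [Filter.tendsto_atTop]
  intro b
  rw [Filter.eventually_atTop]
  refine ⟨max b (b * D b), fun n hn => ?_⟩
  apply le_sel
  · exact le_trans (le_max_left _ _) hn
  · calc b * D b ≤ n := le_trans (le_max_right _ _) hn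
    _ ≤ k n := hk.le_apply

end Sel

lemma tendsto_pow_sel_add {c : ℝ} (hc0 : 0 ≤ c) (hc1 : c < 1) {s : ℕ → ℕ}
    (hs : Tendsto s atTop atTop) :
    Tendsto (fun n => c ^ s n + 1 / (s n : ℝ)) atTop (nhds 0) := by
  have h1 : Tendsto (fun n => c ^ s n) atTop (nhds 0) :=
    (tendsto_pow_atTop_nhds_zero_of_lt_one hc0 hc1).comp hs
  have h2 : Tendsto (fun n => 1 / (s n : ℝ)) atTop (nhds 0) :=
    tendsto_one_div_atTop_nhds_zero_nat.comp hs
  simpa using h1.add h2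

lemma abs_trace_matEmbed_le {d k : ℕ} (hd : 0 < d) {A : Matrix (Fin d) (Fin d) ℂ}
    (hA : A ∈ Matrix.unitaryGroup (Fin d) ℂ) :
    norm (trace (matEmbed d k A))
      ≤ k * (norm (trace A) / d) + d := by
  rw [trace_matEmbed]
  calc norm (((k / d : ℕ) : ℂ) * trace A + ((k % d : ℕ) : ℂ))
      ≤ norm (((k / d : ℕ) : ℂ) * trace A) + norm ((k % d : ℕ) : ℂ) :=
        norm_add_le _ _
    _ = (k / d : ℕ) * norm (trace A) + (k % d : ℕ) := by
        rw [norm_mul]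
        simp [Complex.norm_natCast]
    _ ≤ k * (norm (trace A) / d) + d := by
        have h1 : ((k / d : ℕ) : ℝ) * d ≤ k := by
          exact_mod_cast Nat.div_mul_le_self k d
        have h2 : ((k % d : ℕ) : ℝ) ≤ d := by
          exact_mod_cast le_of_lt (Nat.mod_lt k hd)
        have hd' : (0 : ℝ) < d := by exact_mod_cast hd
        have habs : 0 ≤ norm (trace A) := norm_nonneg _
        have : ((k / d : ℕ) : ℝ) * norm (trace A)
            ≤ k * (norm (trace A) / d) := by
          rw [← mul_div_assoc, le_div_iff₀ hd']
          nlinarith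
        linarith
-- end
variable {Γ' : Type*} [Group Γ']

/-- package a genuine unitary representation as an `MRep` -/
noncomputable def ofHom {k : ℕ} (hk : 0 < k)
    (π : Γ' →* Matrix.unitaryGroup (Fin k) ℂ) : MRep Γ' where
  d := k
  pos := hk
  f := fun g => (π g : Matrix (Fin k) (Fin k) ℂ)
  one := by simp
  uni := fun g => (π g).2

lemma ofHom_mulAt {k : ℕ} (hk : 0 < k) (π : Γ' →* Matrix.unitaryGroup (Fin k) ℂ)
    (a b : Γ') : MulAt (ofHom hk π) a b := by
  simp [MulAt, ofHom]; rfl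

lemma embed_trace_bound {d kk : ℕ} (hd : 0 < d) (hkk : 0 < kk)
    {A : Matrix (Fin d) (Fin d) ℂ} (hA : A ∈ Matrix.unitaryGroup (Fin d) ℂ)
    {s : ℕ} (hs : 1 ≤ s) (hsk : s * d ≤ kk) :
    norm (Matrix.trace (matEmbed d kk A)) / kk
      ≤ norm (Matrix.trace A) / d + 1 / s := by
  have hkk' : (0 : ℝ) < kk := by exact_mod_cast hkk
  have hs' : (0 : ℝ) < s := by exact_mod_cast hs
  have hd' : (0 : ℝ) < d := by exact_mod_cast hd
  have h2 : (d : ℝ) / kk ≤ 1 / s := by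
    rw [div_le_div_iff₀ hkk' hs']
    have : (s : ℝ) * d ≤ kk := by exact_mod_cast hsk
    nlinarith
  calc norm (Matrix.trace (matEmbed d kk A)) / kk
      ≤ (kk * (norm (Matrix.trace A) / d) + d) / kk := by
        gcongr
        exact abs_trace_matEmbed_le hd hA
    _ = norm (Matrix.trace A) / d + d / kk := by
        rw [add_div, mul_div_cancel_left₀ _ (ne_of_gt hkk')]
    _ ≤ norm (Matrix.trace A) / d + 1 / s := by linarith

end HLA

/-- For any strictly increasing sequence of positive integers `k_n`: a MAP group
admits a sequence of genuine homomorphisms `Γ → U(k_n)` forming a hyperlinear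
approximation, and a LEF group admits a partial homomorphism `Γ → U(k_n)` forming
a hyperlinear approximation. -/
theorem hyperlinearApprox_of_map_and_lef (Γ : Type*) [Group Γ] [Countable Γ]
    (k : ℕ → ℕ) (hk : StrictMono k) (hkpos : ∀ n, 0 < k n) :
    (IsMAP Γ → ∃ φ : ∀ n, Γ →* UGp (k n), IsHyperlinearApprox k (fun n g => φ n g)) ∧
    (IsLEF Γ → ∃ φ : ∀ n, Γ → UGp (k n), IsPartialHom φ ∧ IsHyperlinearApprox k φ) := by
  obtain ⟨enum, henum⟩ := exists_surjective_nat Γ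
  constructor
  · -- MAP case
    intro hMAP
    have hR : ∀ g : Γ, ∃ r : HLA.MRep Γ,
        (∀ a b : Γ, HLA.MulAt r a b) ∧ (g ≠ 1 → HLA.ntr r g < 1) := by
      intro g
      by_cases hg : g = 1
      · exact ⟨HLA.trivRep, HLA.trivRep_mulAt, fun h => absurd hg h⟩
      · obtain ⟨k₀, π, hπ⟩ := hMAP g hg
        have hk₀ : 0 < k₀ := by
          by_contra hk
          push_neg at hk
          apply hπ
          apply Subtype.ext
          ext i j
          exact absurd i.2 (by omega)
        refine ⟨HLA.symRep (HLA.ofHom hk₀ π),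
          fun a b => HLA.symRep_mulAt (HLA.ofHom_mulAt hk₀ π a b), fun _ => ?_⟩
        apply HLA.ntr_symRep_lt_one
        intro hc
        exact hπ (Subtype.ext hc)
    choose R hRmul hRlt using hR
    set base : ℕ → HLA.MRep Γ :=
      fun m => HLA.listTensor ((List.range (m + 1)).map fun i => R (enum i)) with hbase_def
    set σr : ℕ → HLA.MRep Γ :=
      fun m => HLA.listTensor (List.replicate m (base m)) with hσr_def
    set D : ℕ → ℕ := fun m => (σr m).d with hD_def
    set s : ℕ → ℕ := fun n => HLA.sel D k n with hs_def
    have hs_tendsto : Tendsto s atTop atTop := HLA.tendsto_sel D k hk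
    have hmulσ : ∀ m, ∀ a b : Γ, HLA.MulAt (σr m) a b := by
      intro m a b
      apply HLA.listTensor_mulAt
      intro r hr
      rw [List.eq_of_mem_replicate hr]
      apply HLA.listTensor_mulAt
      intro r' hr'
      obtain ⟨i, _, rfl⟩ := List.mem_map.mp hr'
      exact hRmul (enum i) a b
    set φ : ∀ n, Γ →* UGp (k n) := fun n =>
      { toFun := fun g => ⟨(HLA.embedRep (k n) (hkpos n) (σr (s n))).f g,
          (HLA.embedRep (k n) (hkpos n) (σr (s n))).uni g⟩
        map_one' := Subtype.ext ((HLA.embedRep (k n) (hkpos n) (σr (s n))).one)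
        map_mul' := fun a b => Subtype.ext (by
          have h := HLA.embedRep_mulAt (k := k n) (hk := hkpos n) (hmulσ (s n) a b)
          exact h) } with hφ_def
    refine ⟨φ, ?_, ?_⟩
    · intro g h
      refine Filter.Tendsto.congr (f₁ := fun _ => (0 : ℝ)) ?_ tendsto_const_nhds
      intro n
      have hcoe : ((φ n (g * h) : UGp (k n)) : Matrix (Fin (k n)) (Fin (k n)) ℂ)
          = ((φ n g : UGp (k n)) : Matrix (Fin (k n)) (Fin (k n)) ℂ)
            * ((φ n h : UGp (k n)) : Matrix (Fin (k n)) (Fin (k n)) ℂ) := by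
        rw [_root_.map_mul (φ n) g h]
        rfl
      show (0 : ℝ) = hsDist (k n) (φ n (g * h) : Matrix (Fin (k n)) (Fin (k n)) ℂ)
        (((φ n g : UGp (k n)) : Matrix (Fin (k n)) (Fin (k n)) ℂ)
          * ((φ n h : UGp (k n)) : Matrix (Fin (k n)) (Fin (k n)) ℂ))
      rw [hcoe]
      exact (HLA.hsDist_self _ _).symm
    · intro g hg
      obtain ⟨j, rfl⟩ := henum g
      set g := enum j
      have hc1 : HLA.ntr (R g) g < 1 := hRlt g hg
      have hc0 : 0 ≤ HLA.ntr (R g) g := HLA.ntr_nonneg _ _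
      apply HLA.tendsto_hsDist_one hkpos
        (fun n => ((φ n g : Matrix (Fin (k n)) (Fin (k n)) ℂ)))
        (fun n => (φ n g).2)
      apply squeeze_zero' (Filter.Eventually.of_forall fun n => by positivity)
        ?_ (HLA.tendsto_pow_sel_add hc0 hc1 hs_tendsto)
      filter_upwards [hs_tendsto.eventually_ge_atTop (max j 1)] with n hn
      have hj' : j ≤ s n := le_trans (le_max_left _ _) hn
      have h1' : 1 ≤ s n := le_trans (le_max_right _ _) hn
      -- bound ntr of the big tensor
      have hbase : HLA.ntr (base (s n)) g ≤ HLA.ntr (R g) g := by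
        rw [hbase_def]
        simp only
        rw [HLA.ntr_listTensor]
        apply HLA.list_prod_le_of_mem
        · intro x hx
          obtain ⟨r', _, rfl⟩ := List.mem_map.mp hx
          exact HLA.ntr_nonneg _ _
        · intro x hx
          obtain ⟨r', _, rfl⟩ := List.mem_map.mp hx
          exact HLA.ntr_le_one _ _
        · exact List.mem_map.mpr ⟨R g, List.mem_map.mpr
            ⟨j, List.mem_range.mpr (by omega), rfl⟩, rfl⟩
      have hσ : HLA.ntr (σr (s n)) g ≤ HLA.ntr (R g) g ^ (s n) := by
        rw [hσr_def]
        simp only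
        rw [HLA.ntr_listTensor, List.map_replicate, List.prod_replicate]
        exact pow_le_pow_left₀ (HLA.ntr_nonneg _ _) hbase _
      have hemb := HLA.embed_trace_bound (σr (s n)).pos (hkpos n)
        ((σr (s n)).uni g) h1' (HLA.sel_spec D k n)
      calc norm (Matrix.trace ((φ n g : Matrix (Fin (k n)) (Fin (k n)) ℂ))) / (k n)
          ≤ norm (Matrix.trace ((σr (s n)).f g)) / (σr (s n)).d + 1 / (s n) := hemb
        _ ≤ HLA.ntr (R g) g ^ (s n) + 1 / (s n) := by
            have : norm (Matrix.trace ((σr (s n)).f g)) / (σr (s n)).d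
                = HLA.ntr (σr (s n)) g := rfl
            rw [this]
            linarith
  · -- LEF case
    intro hLEF
    classical
    set B : ℕ → Finset Γ := fun m => insert 1 ((Finset.range (m + 1)).image enum) with hB_def
    have hmemB : ∀ m j, j ≤ m → enum j ∈ B m := by
      intro m j hj
      exact Finset.mem_insert_of_mem
        (Finset.mem_image.mpr ⟨j, Finset.mem_range.mpr (by omega), rfl⟩)
    have honeB : ∀ m, (1 : Γ) ∈ B m := fun m => Finset.mem_insert_self _ _
    have hLEF' : ∀ m : ℕ, ∃ r : HLA.MRep Γ,
        (∀ g h : Γ, g ∈ B m → h ∈ B m → HLA.MulAt r g h) ∧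
        (∀ g ∈ B m, g ≠ 1 → norm (Matrix.trace (r.f g)) = 0) := by
      intro m
      obtain ⟨F, hgrp, hfin, ψ₀, hinj, hmul⟩ := hLEF (B m)
      have : Finite F := hfin
      have : Fintype F := Fintype.ofFinite F
      have hψ1 : ψ₀ 1 = 1 := by
        have h1 := hmul 1 (honeB m) 1 (honeB m)
        rw [mul_one] at h1
        exact (mul_eq_left.mp h1.symm)
      refine ⟨HLA.regRep ψ₀ hψ1, ?_, ?_⟩
      · intro g h hg hh
        show HLA.permMat (ψ₀ (g * h)) = HLA.permMat (ψ₀ g) * HLA.permMat (ψ₀ h)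
        rw [hmul g hg h hh, HLA.permMat_mul]
      · intro g hg hgne
        have hne : ψ₀ g ≠ 1 := by
          intro hc
          exact hgne (hinj hg (honeB m) (by rw [hc, hψ1]))
        show norm (Matrix.trace (HLA.permMat (ψ₀ g))) = 0
        rw [HLA.trace_permMat hne]
        simp
    choose rr hrmul hrtr using hLEF'
    set D : ℕ → ℕ := fun m => (rr m).d with hD_def
    set s : ℕ → ℕ := fun n => HLA.sel D k n with hs_def
    have hs_tendsto : Tendsto s atTop atTop := HLA.tendsto_sel D k hk
    set ψ : ∀ n, Γ → UGp (k n) := fun n g =>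
      ⟨(HLA.embedRep (k n) (hkpos n) (rr (s n))).f g,
        (HLA.embedRep (k n) (hkpos n) (rr (s n))).uni g⟩ with hψ_def
    have hpartial : IsPartialHom ψ := by
      intro g h
      obtain ⟨a, rfl⟩ := henum g
      obtain ⟨b, rfl⟩ := henum h
      obtain ⟨N, hN⟩ := Filter.eventually_atTop.mp
        (hs_tendsto.eventually_ge_atTop (max a b))
      refine ⟨N, fun n hn => ?_⟩
      have hsn := hN n hn
      have hga : enum a ∈ B (s n) := hmemB _ _ (le_trans (le_max_left _ _) hsn)
      have hgb : enum b ∈ B (s n) := hmemB _ _ (le_trans (le_max_right _ _) hsn)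
      apply Subtype.ext
      have h := HLA.embedRep_mulAt (k := k n) (hk := hkpos n)
        (hrmul (s n) (enum a) (enum b) hga hgb)
      exact h
    refine ⟨ψ, hpartial, ?_, ?_⟩
    · intro g h
      obtain ⟨N, hN⟩ := hpartial g h
      apply Filter.Tendsto.congr' (f₁ := fun _ => (0 : ℝ)) _ tendsto_const_nhds
      rw [Filter.EventuallyEq, Filter.eventually_atTop]
      refine ⟨N, fun n hn => ?_⟩
      show (0 : ℝ) = hsDist (k n) (ψ n (g * h) : Matrix (Fin (k n)) (Fin (k n)) ℂ)
        (((ψ n g : UGp (k n)) : Matrix (Fin (k n)) (Fin (k n)) ℂ)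
          * ((ψ n h : UGp (k n)) : Matrix (Fin (k n)) (Fin (k n)) ℂ))
      have hcoe : ((ψ n (g * h) : UGp (k n)) : Matrix (Fin (k n)) (Fin (k n)) ℂ)
          = ((ψ n g : UGp (k n)) : Matrix (Fin (k n)) (Fin (k n)) ℂ)
            * ((ψ n h : UGp (k n)) : Matrix (Fin (k n)) (Fin (k n)) ℂ) := by
        rw [hN n hn]
        rfl
      rw [hcoe]
      exact (HLA.hsDist_self _ _).symm
    · intro g hg
      obtain ⟨j, rfl⟩ := henum g
      set g := enum j
      apply HLA.tendsto_hsDist_one hkpos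
        (fun n => ((ψ n g : Matrix (Fin (k n)) (Fin (k n)) ℂ)))
        (fun n => (ψ n g).2)
      have hrhs : Tendsto (fun n => 1 / (s n : ℝ)) atTop (nhds 0) :=
        tendsto_one_div_atTop_nhds_zero_nat.comp hs_tendsto
      apply squeeze_zero' (Filter.Eventually.of_forall fun n => by positivity) ?_ hrhs
      filter_upwards [hs_tendsto.eventually_ge_atTop (max j 1)] with n hn
      have hj' : j ≤ s n := le_trans (le_max_left _ _) hn
      have h1' : 1 ≤ s n := le_trans (le_max_right _ _) hn
      have hgB : g ∈ B (s n) := hmemB _ _ hj'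
      have htr0 : norm (Matrix.trace ((rr (s n)).f g)) = 0 :=
        hrtr (s n) g hgB hg
      have hemb := HLA.embed_trace_bound (rr (s n)).pos (hkpos n)
        ((rr (s n)).uni g) h1' (HLA.sel_spec D k n)
      calc norm (Matrix.trace ((ψ n g : Matrix (Fin (k n)) (Fin (k n)) ℂ))) / (k n)
          ≤ norm (Matrix.trace ((rr (s n)).f g)) / (rr (s n)).d + 1 / (s n) := hemb
        _ = 1 / (s n) := by rw [htr0]; simp


end
end
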